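/- arXiv:math/0407498 — 4 statements merged into one kernel-verified Lean document; each statement's English description precedes it below -/
import Mathlib

section
/- Let λ be a regular uncountable cardinal and D a uniform ultrafilter on λ. Then the following are equivalent: (A) D is weakly reasonable; (B) for every increasing continuous sequence ⟨δ_ξ : ξ < λ⟩ of ordinals below λ there is a club C* of λ such that ∪{[δ_ξ, δ_{ξ+1}) : ξ ∈ C*} ∉ D; (C) for every club C of λ the quotient D/C does not extend the filter generated by the clubs of λ (i.e., some club of λ is not a member of D/C). -/
open Set Ordinal Cardinal

noncomputable section

namespace Sh830

/-- `D` is a (proper) ultrafilter on the set `Z` of ordinals. -/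
def IsUltraOn (Z : Set Ordinal) (D : Set (Set Ordinal)) : Prop :=
  (∀ A ∈ D, A ⊆ Z) ∧ Z ∈ D ∧ ∅ ∉ D ∧
  (∀ A B : Set Ordinal, A ∈ D → A ⊆ B → B ⊆ Z → B ∈ D) ∧
  (∀ A B : Set Ordinal, A ∈ D → B ∈ D → A ∩ B ∈ D) ∧
  (∀ A : Set Ordinal, A ⊆ Z → A ∈ D ∨ Z \ A ∈ D)

/-- `D` is an ultrafilter on `λ`, where `λ` is identified with the set of ordinals `< λ`. -/
def IsUltrafilterOn (l : Ordinal) (D : Set (Set Ordinal)) : Prop :=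
  IsUltraOn (Iio l) D

/-- `D` is uniform: every member of `D` has cardinality `λ`. -/
def IsUniformOn (l : Ordinal) (D : Set (Set Ordinal)) : Prop :=
  ∀ A ∈ D, #A = #(Iio l)

/-- `C` is a club (closed and unbounded) subset of `λ`. -/
def IsClubIn (C : Set Ordinal) (l : Ordinal) : Prop :=
  C ⊆ Iio l ∧
  (∀ δ, δ < l → δ ≠ 0 → sSup (C ∩ Iio δ) = δ → δ ∈ C) ∧
  (∀ α, α < l → ∃ β ∈ C, α < β)

/-- The quotient `D/f = {A ⊆ λ : f⁻¹(A) ∈ D}`. -/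
def quotUF (l : Ordinal) (D : Set (Set Ordinal)) (f : Ordinal → Ordinal) :
    Set (Set Ordinal) :=
  {A | A ⊆ Iio l ∧ Iio l ∩ f ⁻¹' A ∈ D}

/-- The family `F_λ` of all non-decreasing functions `λ → λ` with unbounded range. -/
def Flam (l : Ordinal) : Set (Ordinal → Ordinal) :=
  {f | (∀ α, α < l → f α < l) ∧ (∀ α β, α ≤ β → β < l → f α ≤ f β) ∧
    (∀ γ, γ < l → ∃ α, α < l ∧ γ ≤ f α)}

/-- `D` is weakly reasonable: for every `f ∈ F_λ` there is a club `C` of `λ` with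
`∪ {[δ, δ + f δ) : δ ∈ C} ∉ D`. -/
def WeaklyReasonable (l : Ordinal) (D : Set (Set Ordinal)) : Prop :=
  ∀ f ∈ Flam l, ∃ C, IsClubIn C l ∧ (⋃ δ ∈ C, Ico δ (δ + f δ)) ∉ D

/-- The order type of a set of ordinals: the (unique) ordinal order-isomorphic to it. -/
def setOtp (S : Set Ordinal) : Ordinal :=
  sInf {o : Ordinal | Nonempty (Iio o ≃o S)}

/-- `min(β/E)`: the least element of the `E`-equivalence class of `β`. -/
def minClass (E : Ordinal → Ordinal → Prop) (β : Ordinal) : Ordinal :=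
  sInf {γ | E γ β}

/-- The function `f_E` associated with an equivalence relation `E`:
`f_E α = otp {β < α : β = min(β/E) < min(α/E)}`. -/
def fEquiv (E : Ordinal → Ordinal → Prop) (α : Ordinal) : Ordinal :=
  setOtp {β | β < α ∧ β = minClass E β ∧ minClass E β < minClass E α}

/-- The equivalence relation `E_C` associated with a club `C`:
`α E_C β` iff `(∀ γ ∈ C)(α < γ ↔ β < γ)`. -/
def clubRel (C : Set Ordinal) (α β : Ordinal) : Prop :=
  ∀ γ ∈ C, (α < γ ↔ β < γ)

/-- The quotient `D/C = D/E_C = D/f_{E_C}`. -/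
def quotClub (l : Ordinal) (D : Set (Set Ordinal)) (C : Set Ordinal) :
    Set (Set Ordinal) :=
  quotUF l D (fEquiv (clubRel C))

/-- A strategy for Odd in the game `⅁_D`: given `i < λ`, Even's moves `β_j = α_{2j}`
for `j ≤ i`, and Odd's previous moves `γ_j = α_{2j+1}` for `j < i`, it produces
Odd's move `γ_i = α_{2i+1}`. -/
def OddStr : Type 1 :=
  (i : Ordinal) → ((j : Ordinal) → j ≤ i → Ordinal) → ((j : Ordinal) → j < i → Ordinal) → Ordinal

/-- A legal position of the game just before Odd's `i`-th move. -/
def IsPosition (l i : Ordinal) (β γ : Ordinal → Ordinal) : Prop :=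
  i < l ∧ (∀ j, j ≤ i → β j < l) ∧ (∀ j, j < i → β j < γ j ∧ γ j < l) ∧
  (∀ j, j < i → γ j < β (j + 1)) ∧
  (∀ j, j ≤ i → Order.IsSuccLimit j → β j = sSup (γ '' Iio j))

/-- A complete legal play of the game of length `λ`: `β i` is `α_{2i}`
(Even's move) and `γ i` is `α_{2i+1}` (Odd's move). -/
def IsPlay (l : Ordinal) (β γ : Ordinal → Ordinal) : Prop :=
  (∀ i, i < l → β i < l ∧ γ i < l) ∧ (∀ i, i < l → β i < γ i) ∧
  (∀ i, i + 1 < l → γ i < β (i + 1)) ∧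
  (∀ i, i < l → Order.IsSuccLimit i → β i = sSup (γ '' Iio i))

/-- `st` is a legal strategy for Odd: at every legal position it produces a legal move,
i.e. an ordinal `α_{2i+1}` with `α_{2i} < α_{2i+1} < λ`. -/
def IsOddStrategy (l : Ordinal) (st : OddStr) : Prop :=
  ∀ i β γ, IsPosition l i β γ →
    β i < st i (fun j _ => β j) (fun j _ => γ j) ∧
    st i (fun j _ => β j) (fun j _ => γ j) < l

/-- The play `(β, γ)` follows the strategy `st` of Odd. -/
def FollowsOdd (l : Ordinal) (st : OddStr) (β γ : Ordinal → Ordinal) : Prop :=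
  ∀ i, i < l → γ i = st i (fun j _ => β j) (fun j _ => γ j)

/-- `st` is winning for Odd in `⅁_D`: in every play following it, Even loses, i.e.
`∪ {[α_{2i+1}, α_{2i+2}) : i < λ} ∉ D`. -/
def OddWinsWith (l : Ordinal) (D : Set (Set Ordinal)) (st : OddStr) : Prop :=
  ∀ β γ, IsPlay l β γ → FollowsOdd l st β γ →
    (⋃ i ∈ Iio l, Ico (γ i) (β (i + 1))) ∉ D

/-- The next element of `C` above `δ`, i.e. `min (C \ (δ+1))`. -/
def nxt (C : Set Ordinal) (δ : Ordinal) : Ordinal := sInf (C ∩ Ioi δ)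

/-- A condition of the forcing notion `Q¹_λ`; here `Z^p_δ = [δ, nxt C δ)` and
`d δ` is the ultrafilter `d^p_δ` on `Z^p_δ`. -/
structure Q1 (l : Ordinal) where
  γ : Ordinal
  C : Set Ordinal
  d : Ordinal → Set (Set Ordinal)
  γ_lt : γ < l
  club : IsClubIn C l
  lim : ∀ δ ∈ C, Order.IsSuccLimit δ
  ultra : ∀ δ ∈ C, IsUltraOn (Ico δ (nxt C δ)) (d δ)

/-- The order of `Q¹_λ`. -/
def Q1le (l : Ordinal) (p q : Q1 l) : Prop :=
  p.γ ≤ q.γ ∧ p.C ∩ Iio p.γ ⊆ q.C ∧ q.C ⊆ p.C ∧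
  ∀ δ ∈ q.C, ∀ A ∈ q.d δ,
    ∃ ζ ∈ p.C ∩ Ico δ (nxt q.C δ), A ∩ Ico ζ (nxt p.C ζ) ∈ p.d ζ

/-- A condition of the forcing notion `Q⁰_λ`; here `Z^p_δ = [δ, nxt C δ)` and
`d δ` is the ultrafilter `d^p_δ` on `Z^p_δ`. -/
structure Q0 (l : Ordinal) where
  C : Set Ordinal
  d : Ordinal → Set (Set Ordinal)
  club : IsClubIn C l
  lim : ∀ δ ∈ C, Order.IsSuccLimit δ
  ultra : ∀ δ ∈ C, IsUltraOn (Ico δ (nxt C δ)) (d δ)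

/-- The order relation of `Q⁰_λ`, on the underlying data. -/
def Q0leAux (Cp : Set Ordinal) (dp : Ordinal → Set (Set Ordinal))
    (Cq : Set Ordinal) (dq : Ordinal → Set (Set Ordinal)) : Prop :=
  Cq ⊆ Cp ∧ ∀ δ ∈ Cq, ∀ A ∈ dq δ,
    ∃ ζ ∈ Cp ∩ Ico δ (nxt Cq δ), A ∩ Ico ζ (nxt Cp ζ) ∈ dp ζ

/-- The order `≤_{Q⁰_λ}`. -/
def Q0le (l : Ordinal) (p q : Q0 l) : Prop := Q0leAux p.C p.d q.C q.d

/-- The relation `≤*_{Q⁰_λ}`: for some `α < λ` the restrictions beyond `α` are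
`≤_{Q⁰_λ}`-related. -/
def Q0leStar (l : Ordinal) (p q : Q0 l) : Prop :=
  ∃ α, α < l ∧ Q0leAux (p.C \ Iio α) p.d (q.C \ Iio α) q.d

/-- `fil(p) = {A ⊆ λ : (∃ ε < λ)(∀ δ ∈ C^p \ ε)(A ∩ Z^p_δ ∈ d^p_δ)}`. -/
def fil (l : Ordinal) (p : Q0 l) : Set (Set Ordinal) :=
  {A | A ⊆ Iio l ∧ ∃ ε, ε < l ∧ ∀ δ ∈ p.C, ε ≤ δ → A ∩ Ico δ (nxt p.C δ) ∈ p.d δ}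

/-- `fil(G*) = ∪ {fil(p) : p ∈ G*}`. -/
def filG (l : Ordinal) (G : Set (Q0 l)) : Set (Set Ordinal) := ⋃ p ∈ G, fil l p

/-- The relation `≤⁰`: `p ≤⁰ q` iff `fil(p) ⊆ fil(q)`. -/
def le0 (l : Ordinal) (p q : Q0 l) : Prop := fil l p ⊆ fil l q

/-- `G` is `(<c)`-directed with respect to `le`: `G` is nonempty and every subset of `G`
of cardinality `< c` has an upper bound in `G`. -/
def DirLtOn (l : Ordinal) (c : Cardinal.{1}) (G : Set (Q0 l))
    (le : Q0 l → Q0 l → Prop) : Prop :=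
  G.Nonempty ∧ ∀ S : Set (Q0 l), S ⊆ G → #S < c → ∃ r ∈ G, ∀ p ∈ S, le p r

/-- The sum `⊕^e {d_x : x ∈ X}` of ultrafilters `d x` on `Z x` along an ultrafilter `e`
on `X`. -/
def ufSum (X : Set Ordinal) (e : Set (Set Ordinal)) (Z : Ordinal → Set Ordinal)
    (d : Ordinal → Set (Set Ordinal)) : Set (Set Ordinal) :=
  {A | A ⊆ (⋃ x ∈ X, Z x) ∧ {x | x ∈ X ∧ Z x ∩ A ∈ d x} ∈ e}

/-- The function `f_p` associated with `p ∈ Q⁰_λ`: `f_p α` is the member of `C^p` with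
`otp (C^p ∩ f_p α) = ω·α + ω`. -/
def fP (l : Ordinal) (p : Q0 l) (α : Ordinal) : Ordinal :=
  sInf {β | β ∈ p.C ∧ setOtp (p.C ∩ Iio β) = Ordinal.omega0 * α + Ordinal.omega0}

/-- The space `^λλ` (functions below `l` matter). -/
def funSp (l : Ordinal) : Set (Ordinal → Ordinal) := {f | ∀ α, α < l → f α < l}

/-- `F` is a dominating family in `^λλ`. -/
def IsDominating (l : Ordinal) (F : Set (Ordinal → Ordinal)) : Prop :=
  ∀ g ∈ funSp l, ∃ f ∈ F, ∃ α, α < l ∧ ∀ β, α < β → β < l → g β < f β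

/-- The dominating number `𝔡_λ`. -/
def dLam (l : Ordinal) : Cardinal.{1} :=
  sInf {c : Cardinal | ∃ F : Set (Ordinal → Ordinal),
    F ⊆ funSp l ∧ IsDominating l F ∧ #F = c}

/-- `S` is non-stationary in `λ`. -/
def NonStatIn (S : Set Ordinal) (l : Ordinal) : Prop :=
  ∃ C, IsClubIn C l ∧ S ∩ C = ∅

/-- `F` is a club-dominating family in `^λλ`. -/
def IsClubDominating (l : Ordinal) (F : Set (Ordinal → Ordinal)) : Prop :=
  ∀ g ∈ funSp l, ∃ f ∈ F, NonStatIn {β | β < l ∧ f β ≤ g β} l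

/-- The club-dominating number `𝔡_{cl(λ)}`. -/
def dClubLam (l : Ordinal) : Cardinal.{1} :=
  sInf {c : Cardinal | ∃ F : Set (Ordinal → Ordinal),
    F ⊆ funSp l ∧ IsClubDominating l F ∧ #F = c}

/-- `A` is a nowhere dense subset of the space `^λλ` (with basic open sets determined
by initial segments). -/
def IsNwd (l : Ordinal) (A : Set (Ordinal → Ordinal)) : Prop :=
  A ⊆ funSp l ∧
  ∀ s ∈ funSp l, ∀ α, α < l → ∃ t ∈ funSp l, ∃ α', α ≤ α' ∧ α' < l ∧
    (∀ β, β < α → t β = s β) ∧ ∀ f ∈ funSp l, (∀ β, β < α' → f β = t β) → f ∉ A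

/-- `A` belongs to the ideal `M^λ_{λ,λ}`, the `(<λ)`-complete ideal generated by the
nowhere dense subsets of `^λλ`. -/
def InMIdeal (l : Ordinal) (A : Set (Ordinal → Ordinal)) : Prop :=
  A ⊆ funSp l ∧ ∃ θ, θ < l ∧ ∃ B : Ordinal → Set (Ordinal → Ordinal),
    (∀ i, i < θ → IsNwd l (B i)) ∧ A ⊆ ⋃ i ∈ Iio θ, B i

/-- The covering number `cov(M^λ_{λ,λ})`. -/
def covM (l : Ordinal) : Cardinal.{1} :=
  sInf {c : Cardinal | ∃ S : Set (Set (Ordinal → Ordinal)),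
    (∀ A ∈ S, InMIdeal l A) ∧ funSp l ⊆ ⋃₀ S ∧ #S = c}

section Aux

variable {κ : Cardinal}

lemma sup_image_lt (hreg : κ.IsRegular) {ξ : Ordinal} (hξ : ξ < κ.ord)
    (g : Ordinal → Ordinal) (hg : ∀ i, i < ξ → g i < κ.ord) :
    sSup (g '' Iio ξ) < κ.ord := by
  rcases (g '' Iio ξ).eq_empty_or_nonempty with he | hne
  · rw [he, csSup_empty]
    rw [Cardinal.lt_ord]
    simpa using hreg.pos
  · have hb : Ordinal.bsup ξ (fun i _ => g i) < κ.ord :=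
      Cardinal.bsup_lt_ord_of_isRegular hreg (Cardinal.lt_ord.mp hξ) hg
    refine lt_of_le_of_lt (csSup_le hne ?_) hb
    rintro b ⟨i, hi, rfl⟩
    exact Ordinal.le_bsup _ i hi

lemma sup_nat_lt (hreg : κ.IsRegular) (hunc : ℵ₀ < κ) (a : ℕ → Ordinal)
    (ha : ∀ n, a n < κ.ord) : sSup (range a) < κ.ord :=
  Cardinal.iSup_lt_ord_lift_of_isRegular hreg (by simpa using hunc) ha

variable {l : Ordinal}

lemma bddAbove_of_subset_Iio {S : Set Ordinal} (h : S ⊆ Iio l) : BddAbove S :=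
  ⟨l, fun x hx => le_of_lt (h hx)⟩

/-- extract unboundedness from a `sSup` equality -/
lemma unbdd_of_sSup_eq {S : Set Ordinal} {δ : Ordinal} (h : sSup (S ∩ Iio δ) = δ)
    (hδ : δ ≠ 0) : ∀ γ, γ < δ → ∃ x, x ∈ S ∧ γ < x ∧ x < δ := by
  intro γ hγ
  have hne : (S ∩ Iio δ).Nonempty := by
    by_contra hemp
    rw [not_nonempty_iff_eq_empty] at hemp
    rw [hemp, csSup_empty] at h
    exact hδ h.symm
  obtain ⟨x, hx, hγx⟩ := exists_lt_of_lt_csSup hne (h ▸ hγ)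
  exact ⟨x, hx.1, hγx, hx.2⟩

lemma sSup_eq_of_subset {S T : Set Ordinal} {δ : Ordinal} (hST : S ⊆ T)
    (h : sSup (S ∩ Iio δ) = δ) (hδ : δ ≠ 0) : sSup (T ∩ Iio δ) = δ := by
  have hne : (S ∩ Iio δ).Nonempty := by
    by_contra hemp
    rw [not_nonempty_iff_eq_empty] at hemp
    rw [hemp, csSup_empty] at h
    exact hδ h.symm
  refine le_antisymm (csSup_le (hne.mono (inter_subset_inter hST le_rfl))
    fun x hx => le_of_lt hx.2) ?_
  calc δ = sSup (S ∩ Iio δ) := h.symm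
    _ ≤ sSup (T ∩ Iio δ) := csSup_le_csSup
        ⟨δ, fun x hx => le_of_lt hx.2⟩ hne (inter_subset_inter hST le_rfl)

/-- sSup equal to a nonzero δ forces δ to be a limit given the set lies in `Iio δ`. -/
lemma isLimit_of_sSup_eq {S : Set Ordinal} {δ : Ordinal} (h : sSup (S ∩ Iio δ) = δ)
    (hδ : δ ≠ 0) : Order.IsSuccLimit δ := by
  rcases Ordinal.zero_or_succ_or_isSuccLimit δ with rfl | ⟨a, rfl⟩ | hl
  · exact absurd rfl hδ
  · obtain ⟨x, _, hax, hxa⟩ := unbdd_of_sSup_eq h hδ a (Order.lt_succ a)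
    exact absurd (Order.lt_succ_iff.mp hxa) (not_le.mpr hax)
  · exact hl

lemma IsClubIn.tail {C : Set Ordinal} (hC : IsClubIn C l) {b : Ordinal} (hb : b < l) :
    IsClubIn (C \ Iio b) l := by
  obtain ⟨hsub, hcl, hun⟩ := hC
  refine ⟨fun x hx => hsub hx.1, ?_, ?_⟩
  · intro δ hδ hδ0 hs
    obtain ⟨x, hx, _, hxδ⟩ := unbdd_of_sSup_eq hs hδ0 0 (pos_iff_ne_zero.mpr hδ0)
    have hbx : b ≤ x := not_lt.mp hx.2
    have hδC : δ ∈ C := hcl δ hδ hδ0 (sSup_eq_of_subset (fun y hy => hy.1) hs hδ0)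
    exact ⟨hδC, not_lt.mpr (hbx.trans (le_of_lt hxδ))⟩
  · intro α hα
    obtain ⟨β, hβC, hβ⟩ := hun (max α b) (max_lt hα hb)
    exact ⟨β, ⟨hβC, not_lt.mpr (le_of_lt (lt_of_le_of_lt (le_max_right α b) hβ))⟩,
      lt_of_le_of_lt (le_max_left α b) hβ⟩

lemma isClubIn_Iio (hl : Order.IsSuccLimit l) : IsClubIn (Iio l) l :=
  ⟨le_rfl, fun δ hδ _ _ => hδ, fun α hα => ⟨α + 1, hl.succ_lt hα, lt_add_one α⟩⟩

end Aux
section Aux2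

variable {κ : Cardinal} {l : Ordinal}

/-- strictly monotone (on `Iio l`) functions dominate the identity -/
lemma le_self_of_strictMonoOn {g : Ordinal → Ordinal}
    (hsm : ∀ α β, α < β → β < l → g α < g β) : ∀ ξ, ξ < l → ξ ≤ g ξ := by
  intro ξ
  induction ξ using Ordinal.induction with
  | h ξ ih =>
    intro hξ
    by_contra hlt
    push_neg at hlt
    have h1 : g ξ ≤ g (g ξ) := ih (g ξ) hlt (hlt.trans hξ)
    have h2 : g (g ξ) < g ξ := hsm (g ξ) ξ hlt hξ
    exact absurd (h1.trans_lt h2) (lt_irrefl _)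

/-- Intersection of two clubs is a club. -/
lemma IsClubIn.inter (hreg : κ.IsRegular) (hunc : ℵ₀ < κ) {C₁ C₂ : Set Ordinal}
    (h₁ : IsClubIn C₁ κ.ord) (h₂ : IsClubIn C₂ κ.ord) : IsClubIn (C₁ ∩ C₂) κ.ord := by
  obtain ⟨hs₁, hc₁, hu₁⟩ := h₁
  obtain ⟨hs₂, hc₂, hu₂⟩ := h₂
  refine ⟨fun x hx => hs₁ hx.1, ?_, ?_⟩
  · intro δ hδ hδ0 hs
    exact ⟨hc₁ δ hδ hδ0 (sSup_eq_of_subset inter_subset_left hs hδ0),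
      hc₂ δ hδ hδ0 (sSup_eq_of_subset inter_subset_right hs hδ0)⟩
  · intro α hα
    classical
    -- u x : an element of C₁ above x ; v x : an element of C₂ above u x
    have hu : ∀ x, ∃ y, x < κ.ord → y ∈ C₁ ∧ x < y ∧ y < κ.ord := by
      intro x
      by_cases hx : x < κ.ord
      · obtain ⟨y, hy, hxy⟩ := hu₁ x hx
        exact ⟨y, fun _ => ⟨hy, hxy, hs₁ hy⟩⟩
      · exact ⟨0, fun h => absurd h hx⟩
    have hv : ∀ x, ∃ y, x < κ.ord → y ∈ C₂ ∧ x < y ∧ y < κ.ord := by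
      intro x
      by_cases hx : x < κ.ord
      · obtain ⟨y, hy, hxy⟩ := hu₂ x hx
        exact ⟨y, fun _ => ⟨hy, hxy, hs₂ hy⟩⟩
      · exact ⟨0, fun h => absurd h hx⟩
    choose u hu' using hu
    choose v hv' using hv
    let a : ℕ → Ordinal := fun n => Nat.rec α (fun _ y => v (u y)) n
    have key : ∀ n, a n < κ.ord ∧ (a n < u (a n) ∧ u (a n) ∈ C₁ ∧ u (a n) < κ.ord) ∧
        (u (a n) < a (n+1) ∧ a (n+1) ∈ C₂ ∧ a (n+1) < κ.ord) := by
      intro n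
      induction n with
      | zero =>
        have h1 := hu' α hα
        have h2 := hv' (u α) h1.2.2
        exact ⟨hα, ⟨h1.2.1, h1.1, h1.2.2⟩, ⟨h2.2.1, h2.1, h2.2.2⟩⟩
      | succ n ih =>
        have h1 := hu' (a (n+1)) ih.2.2.2.2
        have h2 := hv' (u (a (n+1))) h1.2.2
        exact ⟨ih.2.2.2.2, ⟨h1.2.1, h1.1, h1.2.2⟩, ⟨h2.2.1, h2.1, h2.2.2⟩⟩
    have hmono : ∀ n, a n < a (n + 1) := fun n =>
      (key n).2.1.1.trans (key n).2.2.1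
    set β := sSup (range a) with hβ
    have hβl : β < κ.ord := sup_nat_lt hreg hunc a (fun n => (key n).1)
    have hle : ∀ n, a n ≤ β := fun n =>
      le_csSup (bddAbove_of_subset_Iio (by rintro x ⟨n, rfl⟩; exact (key n).1)) ⟨n, rfl⟩
    have hαβ : α < β := lt_of_lt_of_le (hmono 0) (hle 1)
    have hβ0 : β ≠ 0 := fun h => by simp [h] at hαβ
    have hsup : ∀ (S : Set Ordinal) (w : ℕ → Ordinal), (∀ n, w n ∈ S) →
        (∀ n, a n ≤ w n) → (∀ n, w n < β) → sSup (S ∩ Iio β) = β := by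
      intro S w hwS hwa hwlt
      refine le_antisymm (csSup_le ⟨w 0, hwS 0, hwlt 0⟩
        fun x hx => le_of_lt hx.2) ?_
      refine csSup_le ⟨α, 0, rfl⟩ ?_
      rintro x ⟨n, rfl⟩
      calc a n ≤ w n := hwa n
        _ ≤ sSup (S ∩ Iio β) := le_csSup (bddAbove_of_subset_Iio
            (fun y hy => hy.2)) ⟨hwS n, hwlt n⟩
    refine ⟨β, ⟨?_, ?_⟩, hαβ⟩
    · exact hc₁ β hβl hβ0 (hsup C₁ (fun n => u (a n)) (fun n => (key n).2.1.2.1)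
        (fun n => le_of_lt (key n).2.1.1) (fun n => (key n).2.2.1.trans_le (hle (n+1))))
    · exact hc₂ β hβl hβ0 (hsup C₂ (fun n => a (n+1)) (fun n => (key n).2.2.2.1)
        (fun n => le_of_lt (hmono n)) (fun n => (hmono (n+1)).trans_le (hle (n+2))))

end Aux2
section Aux3

variable {κ : Cardinal} {l : Ordinal} {g : Ordinal → Ordinal}

/-- image of a club under a normal function is a club -/
lemma club_image (hl : Order.IsSuccLimit l)
    (hsm : ∀ α β, α < β → β < l → g α < g β) (hgl : ∀ ξ, ξ < l → g ξ < l)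
    (hcont : ∀ ξ, ξ < l → Order.IsSuccLimit ξ → g ξ = sSup (g '' Iio ξ))
    {C : Set Ordinal} (hC : IsClubIn C l) : IsClubIn (g '' C) l := by
  obtain ⟨hs, hcl, hun⟩ := hC
  have hmono : ∀ α β, α ≤ β → β < l → g α ≤ g β := by
    intro α β hab hβ
    rcases eq_or_lt_of_le hab with rfl | h
    · exact le_rfl
    · exact le_of_lt (hsm α β h hβ)
  refine ⟨?_, ?_, ?_⟩
  · rintro x ⟨ξ, hξ, rfl⟩
    exact hgl ξ (hs hξ)
  · intro δ hδ hδ0 hsup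
    have hTeq : g '' C ∩ Iio δ = g '' {ξ | ξ ∈ C ∧ g ξ < δ} := by
      ext x
      constructor
      · rintro ⟨⟨ξ, hξ, rfl⟩, hxδ⟩
        exact ⟨ξ, ⟨hξ, hxδ⟩, rfl⟩
      · rintro ⟨ξ, ⟨hξ, hgξ⟩, rfl⟩
        exact ⟨⟨ξ, hξ, rfl⟩, hgξ⟩
    set T : Set Ordinal := {ξ | ξ ∈ C ∧ g ξ < δ} with hT
    rw [hTeq] at hsup
    have hne : T.Nonempty := by
      by_contra hemp
      rw [not_nonempty_iff_eq_empty] at hemp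
      rw [hemp, image_empty, csSup_empty] at hsup
      exact hδ0 hsup.symm
    have hTl : ∀ t ∈ T, t < l := fun t ht => hs ht.1
    have hTδ : ∀ t ∈ T, t < δ := fun t ht =>
      lt_of_le_of_lt (le_self_of_strictMonoOn hsm t (hTl t ht)) ht.2
    set ξ₀ := sSup T with hξ₀
    have hξ₀δ : ξ₀ ≤ δ := csSup_le hne fun t ht => le_of_lt (hTδ t ht)
    have hξ₀l : ξ₀ < l := lt_of_le_of_lt hξ₀δ hδ
    have hbddT : BddAbove T := bddAbove_of_subset_Iio (fun t ht => hTδ t ht)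
    have hnotmem : ξ₀ ∉ T := by
      intro hmem
      have : sSup (g '' T) ≤ g ξ₀ := csSup_le (hne.image g) (by
        rintro x ⟨t, ht, rfl⟩
        exact hmono t ξ₀ (le_csSup hbddT ht) hξ₀l)
      rw [hsup] at this
      exact absurd (lt_of_le_of_lt this hmem.2) (lt_irrefl δ)
    have hlt : ∀ t ∈ T, t < ξ₀ := fun t ht =>
      lt_of_le_of_ne (le_csSup hbddT ht) (fun h => hnotmem (h ▸ ht))
    have hξ₀0 : ξ₀ ≠ 0 := by
      obtain ⟨t, ht⟩ := hne
      exact fun h => not_lt_zero (h ▸ hlt t ht)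
    have hunbdd : ∀ γ, γ < ξ₀ → ∃ t ∈ T, γ < t := by
      intro γ hγ
      obtain ⟨t, ht, hγt⟩ := exists_lt_of_lt_csSup hne hγ
      exact ⟨t, ht, hγt⟩
    have hlim : Order.IsSuccLimit ξ₀ := by
      rcases Ordinal.zero_or_succ_or_isSuccLimit ξ₀ with h | ⟨a, ha⟩ | h
      · exact absurd h hξ₀0
      · obtain ⟨t, ht, hat⟩ := hunbdd a (ha ▸ Order.lt_succ a)
        exact absurd (ha ▸ hlt t ht) (not_lt.mpr (Order.succ_le_of_lt hat))
      · exact h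
    have hξ₀C : ξ₀ ∈ C := by
      refine hcl ξ₀ hξ₀l hξ₀0 (le_antisymm (csSup_le ?_ fun x hx => le_of_lt hx.2) ?_)
      · obtain ⟨t, ht⟩ := hne
        exact ⟨t, ht.1, hlt t ht⟩
      · refine csSup_le hne fun t ht => le_csSup (bddAbove_of_subset_Iio
          (fun y hy => hy.2)) ⟨ht.1, hlt t ht⟩
    refine ⟨ξ₀, hξ₀C, ?_⟩
    rw [hcont ξ₀ hξ₀l hlim, ← hsup]
    apply le_antisymm
    · refine csSup_le (⟨g 0, 0, hlim.pos, rfl⟩) ?_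
      rintro x ⟨c, hc, rfl⟩
      obtain ⟨t, ht, hct⟩ := hunbdd c hc
      calc g c ≤ g t := hmono c t (le_of_lt hct) (hTl t ht)
        _ ≤ sSup (g '' T) := le_csSup (bddAbove_of_subset_Iio (by
            rintro y ⟨t', ht', rfl⟩; exact hgl t' (hTl t' ht'))) ⟨t, ht, rfl⟩
    · refine csSup_le (hne.image g) ?_
      rintro x ⟨t, ht, rfl⟩
      exact le_csSup (bddAbove_of_subset_Iio (by
        rintro y ⟨c, hc, rfl⟩; exact hgl c (hc.trans hξ₀l))) ⟨t, hlt t ht, rfl⟩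
  · intro α hα
    obtain ⟨ξ, hξC, hαξ⟩ := hun α hα
    exact ⟨g ξ, ⟨ξ, hξC, rfl⟩, lt_of_lt_of_le hαξ (le_self_of_strictMonoOn hsm ξ (hs hξC))⟩

/-- preimage of a club under a normal function is a club -/
lemma club_preimage (hreg : κ.IsRegular) (hunc : ℵ₀ < κ)
    (hsm : ∀ α β, α < β → β < κ.ord → g α < g β) (hgl : ∀ ξ, ξ < κ.ord → g ξ < κ.ord)
    (hcont : ∀ ξ, ξ < κ.ord → Order.IsSuccLimit ξ → g ξ = sSup (g '' Iio ξ))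
    {C : Set Ordinal} (hC : IsClubIn C κ.ord) :
    IsClubIn {ξ | ξ < κ.ord ∧ g ξ ∈ C} κ.ord := by
  have hl : Order.IsSuccLimit κ.ord := Cardinal.isSuccLimit_ord hreg.aleph0_le
  obtain ⟨hs, hcl, hun⟩ := hC
  refine ⟨fun x hx => hx.1, ?_, ?_⟩
  · intro η hη hη0 hsup
    set P : Set Ordinal := {ξ | ξ < κ.ord ∧ g ξ ∈ C} with hP
    have hunbdd : ∀ γ, γ < η → ∃ x, x ∈ P ∧ γ < x ∧ x < η := unbdd_of_sSup_eq hsup hη0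
    have hlim : Order.IsSuccLimit η := isLimit_of_sSup_eq hsup hη0
    refine ⟨hη, ?_⟩
    have hgη0 : g η ≠ 0 := by
      have := hsm 0 η hlim.pos hη
      exact fun h => not_lt_zero (h ▸ this)
    refine hcl (g η) (hgl η hη) hgη0 ?_
    rw [hcont η hη hlim]
    apply le_antisymm
    · refine csSup_le ?_ (fun x hx => le_of_lt hx.2)
      obtain ⟨x, hx, _, hxη⟩ := hunbdd 0 hlim.pos
      refine ⟨g x, hx.2, ?_⟩
      show g x < sSup (g '' Iio η)
      have hx1 : x + 1 < η := by
        have := hlim.succ_lt hxη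
        simpa [Order.succ] using this
      calc g x < g (x+1) := hsm x (x+1) (lt_add_one x) (hx1.trans hη)
        _ ≤ sSup (g '' Iio η) := le_csSup (bddAbove_of_subset_Iio (by
            rintro y ⟨c, hc, rfl⟩; exact hgl c (hc.trans hη))) ⟨x+1, hx1, rfl⟩
    · refine csSup_le (⟨g 0, 0, hlim.pos, rfl⟩) ?_
      rintro x ⟨c, hc, rfl⟩
      obtain ⟨t, ht, hct, htη⟩ := hunbdd c hc
      have h1 : g c < g t := hsm c t hct (ht.1)
      have ht1 : t < η → t + 1 < η := fun h => by
        have := hlim.succ_lt h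
        simpa [Order.succ] using this
      have h2 : g t < sSup (g '' Iio η) :=
        lt_of_lt_of_le (hsm t (t+1) (lt_add_one t) ((ht1 htη).trans hη))
          (le_csSup (bddAbove_of_subset_Iio (by
            rintro y ⟨c', hc', rfl⟩; exact hgl c' (hc'.trans hη))) ⟨t+1, ht1 htη, rfl⟩)
      exact le_of_lt (lt_of_lt_of_le h1 (le_csSup (bddAbove_of_subset_Iio
        (fun y hy => hy.2)) ⟨ht.2, h2⟩))
  · intro α hα
    have himg : IsClubIn (g '' Iio κ.ord) κ.ord :=
      club_image hl hsm hgl hcont (isClubIn_Iio hl)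
    have hint : IsClubIn (C ∩ g '' Iio κ.ord) κ.ord :=
      IsClubIn.inter hreg hunc ⟨hs, hcl, hun⟩ himg
    obtain ⟨y, ⟨hyC, ξ, hξ, rfl⟩, hαy⟩ := hint.2.2 (g α) (hgl α hα)
    refine ⟨ξ, ⟨hξ, hyC⟩, ?_⟩
    by_contra hle
    push_neg at hle
    rcases eq_or_lt_of_le hle with rfl | h
    · exact absurd hαy (lt_irrefl _)
    · exact absurd (hαy.trans (hsm ξ α h hα)) (lt_irrefl _)

end Aux3
section AB

variable {κ : Cardinal} {l : Ordinal} {D : Set (Set Ordinal)}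

lemma notin_mono (hD : IsUltrafilterOn l D) {A B : Set Ordinal} (hAB : A ⊆ B)
    (hBl : B ⊆ Iio l) (hB : B ∉ D) : A ∉ D :=
  fun hA => hB (hD.2.2.2.1 A B hA hAB hBl)

lemma add_lt_ord (hreg : κ.IsRegular) {a b : Ordinal} (ha : a < κ.ord) (hb : b < κ.ord) :
    a + b < κ.ord := by
  rw [Cardinal.lt_ord] at *
  rw [Ordinal.card_add]
  exact Cardinal.add_lt_of_lt hreg.aleph0_le ha hb

/-- (A) implies (B) -/
lemma A_imp_B (hreg : κ.IsRegular) (hunc : ℵ₀ < κ) (hD : IsUltrafilterOn κ.ord D)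
    (hwr : WeaklyReasonable κ.ord D)
    (δ : Ordinal → Ordinal) (hδl : ∀ ξ, ξ < κ.ord → δ ξ < κ.ord)
    (hδm : ∀ ξ ζ, ξ < ζ → ζ < κ.ord → δ ξ < δ ζ)
    (hδc : ∀ ξ, ξ < κ.ord → Order.IsSuccLimit ξ → δ ξ = sSup (δ '' Iio ξ)) :
    ∃ C', IsClubIn C' κ.ord ∧ (⋃ ξ ∈ C', Ico (δ ξ) (δ (ξ + 1))) ∉ D := by
  have hl : Order.IsSuccLimit κ.ord := Cardinal.isSuccLimit_ord hreg.aleph0_le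
  have hsucc : ∀ ξ : Ordinal, ξ < κ.ord → ξ + 1 < κ.ord := fun ξ hξ => by
    have := hl.succ_lt hξ; simpa [Order.succ] using this
  have hmono : ∀ α β, α ≤ β → β < κ.ord → δ α ≤ δ β := by
    intro α β hab hβ
    rcases eq_or_lt_of_le hab with rfl | h
    · exact le_rfl
    · exact le_of_lt (hδm α β h hβ)
  set f : Ordinal → Ordinal := fun α => δ (α + 1) with hf
  have hfF : f ∈ Flam κ.ord := by
    refine ⟨fun α hα => hδl _ (hsucc α hα), ?_, ?_⟩
    · intro α β hab hβ
      exact hmono (α+1) (β+1) (by simpa using hab) (hsucc β hβ)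
    · intro γ hγ
      refine ⟨γ, hγ, ?_⟩
      calc γ ≤ γ + 1 := le_of_lt (lt_add_one γ)
        _ ≤ δ (γ + 1) := le_self_of_strictMonoOn hδm (γ+1) (hsucc γ hγ)
  obtain ⟨C, hCclub, hCnot⟩ := hwr f hfF
  set Cs : Set Ordinal := {ξ | ξ < κ.ord ∧ δ ξ ∈ C} with hCs
  have hCsclub : IsClubIn Cs κ.ord := club_preimage hreg hunc hδm hδl hδc hCclub
  refine ⟨Cs, hCsclub, ?_⟩
  have hUl : (⋃ α ∈ C, Ico α (α + f α)) ⊆ Iio κ.ord := by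
    intro x hx
    simp only [mem_iUnion] at hx
    obtain ⟨α, hα, hx⟩ := hx
    exact lt_of_lt_of_le hx.2 (le_of_lt (add_lt_ord hreg (hCclub.1 hα)
      (hδl _ (hsucc α (hCclub.1 hα))))) |>.trans_le le_rfl
  refine notin_mono hD ?_ hUl hCnot
  intro x hx
  simp only [mem_iUnion] at hx ⊢
  obtain ⟨ξ, hξ, hx1, hx2⟩ := hx
  refine ⟨δ ξ, hξ.2, hx1, lt_of_lt_of_le hx2 ?_⟩
  calc δ (ξ + 1) ≤ δ (δ ξ + 1) := hmono (ξ+1) (δ ξ + 1)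
        (by simpa using le_self_of_strictMonoOn hδm ξ hξ.1) (hsucc _ (hδl ξ hξ.1))
    _ ≤ δ ξ + δ (δ ξ + 1) := le_add_self

end AB
section BA

variable {κ : Cardinal} {D : Set (Set Ordinal)}

/-- (B) implies (A) -/
lemma B_imp_A (hreg : κ.IsRegular) (hunc : ℵ₀ < κ) (hD : IsUltrafilterOn κ.ord D)
    (hB : ∀ δ : Ordinal → Ordinal, (∀ ξ, ξ < κ.ord → δ ξ < κ.ord) →
        (∀ ξ ζ, ξ < ζ → ζ < κ.ord → δ ξ < δ ζ) →
        (∀ ξ, ξ < κ.ord → Order.IsSuccLimit ξ → δ ξ = sSup (δ '' Iio ξ)) →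
        ∃ C', IsClubIn C' κ.ord ∧ (⋃ ξ ∈ C', Ico (δ ξ) (δ (ξ + 1))) ∉ D) :
    WeaklyReasonable κ.ord D := by
  have hl : Order.IsSuccLimit κ.ord := Cardinal.isSuccLimit_ord hreg.aleph0_le
  have hsucc : ∀ ξ : Ordinal, ξ < κ.ord → ξ + 1 < κ.ord := fun ξ hξ => by
    have := hl.succ_lt hξ; simpa [Order.succ] using this
  intro f hf
  obtain ⟨hf1, _, _⟩ := hf
  set δ : Ordinal → Ordinal := fun ξ =>
    Ordinal.limitRecOn (motive := fun _ => Ordinal) ξ 0 (fun _ ih => ih + f ih + 1)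
      (fun ζ _ ih => sSup {x | ∃ c, ∃ h : c < ζ, ih c h = x}) with hδ
  have hδ0 : δ 0 = 0 := Ordinal.limitRecOn_zero _ _ _
  have hδsucc : ∀ ξ, δ (ξ + 1) = δ ξ + f (δ ξ) + 1 := by
    intro ξ
    show δ (Order.succ ξ) = _
    exact Ordinal.limitRecOn_succ _ _ _ _
  have hδlim : ∀ ξ, Order.IsSuccLimit ξ → δ ξ = sSup (δ '' Iio ξ) := by
    intro ξ hξ
    have h := Ordinal.limitRecOn_limit (motive := fun _ => Ordinal) ξ 0
      (fun _ ih => ih + f ih + 1) (fun ζ _ ih => sSup {x | ∃ c, ∃ h : c < ζ, ih c h = x}) hξ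
    refine h.trans ?_
    congr 1
    ext x
    constructor
    · rintro ⟨c, hc, rfl⟩
      exact ⟨c, hc, rfl⟩
    · rintro ⟨c, hc, rfl⟩
      exact ⟨c, hc, rfl⟩
  have hδl : ∀ ξ, ξ < κ.ord → δ ξ < κ.ord := by
    intro ξ
    induction ξ using Ordinal.induction with
    | h ξ ih =>
      intro hξ
      rcases Ordinal.zero_or_succ_or_isSuccLimit ξ with rfl | ⟨ζ, rfl⟩ | hlim
      · rw [hδ0]; rw [Cardinal.lt_ord]; simpa using hreg.pos
      · have hζ : ζ < κ.ord := lt_trans (Order.lt_succ ζ) hξ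
        have h1 : δ ζ < κ.ord := ih ζ (Order.lt_succ ζ) hζ
        have h2 : δ (Order.succ ζ) = δ ζ + f (δ ζ) + 1 := by
          rw [← Ordinal.add_one_eq_succ]; exact hδsucc ζ
        rw [h2]
        have hone : (1 : Ordinal) < κ.ord := by
          rw [Cardinal.lt_ord]
          simpa using Cardinal.one_lt_aleph0.trans_le hreg.aleph0_le
        exact add_lt_ord hreg (add_lt_ord hreg h1 (hf1 _ h1)) hone
      · rw [hδlim ξ hlim]
        exact sup_image_lt hreg hξ δ (fun c hc => ih c hc (hc.trans hξ))
  have hδm : ∀ ξ, ξ < κ.ord → ∀ η, η < ξ → δ η < δ ξ := by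
    intro ξ
    induction ξ using Ordinal.induction with
    | h ξ ih =>
      intro hξ η hη
      rcases Ordinal.zero_or_succ_or_isSuccLimit ξ with rfl | ⟨ζ, rfl⟩ | hlim
      · exact absurd hη not_lt_zero
      · have hζκ : ζ < κ.ord := lt_trans (Order.lt_succ ζ) hξ
        have hle : δ η ≤ δ ζ := by
          rcases eq_or_lt_of_le (Order.lt_succ_iff.mp hη) with rfl | h
          · exact le_rfl
          · exact le_of_lt (ih ζ (Order.lt_succ ζ) hζκ η h)
        have h2 : δ (Order.succ ζ) = δ ζ + f (δ ζ) + 1 := by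
          rw [← Ordinal.add_one_eq_succ]; exact hδsucc ζ
        rw [h2]
        calc δ η ≤ δ ζ := hle
          _ ≤ δ ζ + f (δ ζ) := le_self_add
          _ < δ ζ + f (δ ζ) + 1 := lt_add_one _
      · have hη1 : η + 1 < ξ := by
          have := hlim.succ_lt hη
          simpa [Order.succ] using this
        have hstep : δ η < δ (η + 1) := by
          rw [hδsucc η]
          calc δ η ≤ δ η + f (δ η) := le_self_add
            _ < δ η + f (δ η) + 1 := lt_add_one _
        refine lt_of_lt_of_le hstep ?_
        rw [hδlim ξ hlim]
        exact le_csSup (bddAbove_of_subset_Iio (by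
          rintro y ⟨c, hc, rfl⟩; exact hδl c (hc.trans hξ))) ⟨η + 1, hη1, rfl⟩
  have hδm' : ∀ ξ ζ, ξ < ζ → ζ < κ.ord → δ ξ < δ ζ := fun ξ ζ h hζ => hδm ζ hζ ξ h
  obtain ⟨Cs, hCsclub, hCsnot⟩ := hB δ hδl hδm' (fun ξ hξ hlim => hδlim ξ hlim)
  refine ⟨δ '' Cs, club_image hl hδm' hδl (fun ξ hξ hlim => hδlim ξ hlim) hCsclub, ?_⟩
  have hVl : (⋃ ξ ∈ Cs, Ico (δ ξ) (δ (ξ + 1))) ⊆ Iio κ.ord := by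
    intro x hx
    simp only [mem_iUnion] at hx
    obtain ⟨ξ, hξ, _, hx2⟩ := hx
    exact hx2.trans (hδl _ (hsucc ξ (hCsclub.1 hξ)))
  refine notin_mono hD ?_ hVl hCsnot
  intro x hx
  simp only [mem_iUnion] at hx ⊢
  obtain ⟨α, ⟨ξ, hξ, rfl⟩, hx1, hx2⟩ := hx
  refine ⟨ξ, hξ, hx1, ?_⟩
  rw [hδsucc ξ]
  exact hx2.trans_le (le_of_lt (lt_add_one _))

end BA
section Enum

variable {κ : Cardinal} {C : Set Ordinal}

/-- the enumerating set: `{0} ∪ C ∪ [l, ∞)` -/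
def eSet (C : Set Ordinal) (l : Ordinal) : Set Ordinal := insert 0 C ∪ Ici l

/-- the enumeration of `{0} ∪ C` -/
def eFun (C : Set Ordinal) (l : Ordinal) : Ordinal → Ordinal :=
  Ordinal.enumOrd (eSet C l)

variable {l : Ordinal}

lemma eSet_not_bddAbove : ¬ BddAbove (eSet C l) := by
  rintro ⟨b, hb⟩
  have h1 : max l (b + 1) ∈ eSet C l := Or.inr (show l ≤ max l (b + 1) from le_max_left _ _)
  have h2 := hb h1
  exact absurd ((lt_add_one b).trans_le (le_max_right l (b+1))) (not_lt.mpr h2)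

lemma eFun_strictMono : StrictMono (eFun C l) :=
  Ordinal.enumOrd_strictMono eSet_not_bddAbove

lemma eFun_mem (ξ : Ordinal) : eFun C l ξ ∈ eSet C l :=
  Ordinal.enumOrd_mem eSet_not_bddAbove ξ

lemma eFun_zero : eFun C l 0 = 0 := by
  rw [eFun, Ordinal.enumOrd_zero]
  exact le_antisymm (csInf_le' (Or.inl (mem_insert _ _))) zero_le

variable (hreg : κ.IsRegular) (hC : IsClubIn C κ.ord)

include hreg hC in
lemma eFun_lt : ∀ ξ, ξ < κ.ord → eFun C κ.ord ξ < κ.ord := by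
  intro ξ
  induction ξ using Ordinal.induction with
  | h ξ ih =>
    intro hξ
    have hsl : sSup (eFun C κ.ord '' Iio ξ) < κ.ord :=
      sup_image_lt hreg hξ _ (fun c hc => ih c hc (hc.trans hξ))
    obtain ⟨x, hxC, hsx⟩ := hC.2.2 _ hsl
    have hxS : x ∈ eSet C κ.ord := Or.inl (mem_insert_of_mem _ hxC)
    refine lt_of_le_of_lt (Ordinal.enumOrd_le_of_forall_lt hxS ?_) (hC.1 hxC)
    intro b hb
    have hbdd : BddAbove (eFun C κ.ord '' Iio ξ) := bddAbove_of_subset_Iio (by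
      rintro y ⟨c, hc, rfl⟩
      exact mem_Iio.mpr (ih c (mem_Iio.mp hc) ((mem_Iio.mp hc).trans hξ)))
    exact lt_of_le_of_lt (le_csSup hbdd (mem_image_of_mem _ hb)) hsx

include hreg hC in
lemma eFun_mem' : ∀ ξ, ξ < κ.ord → eFun C κ.ord ξ ∈ insert 0 C := by
  intro ξ hξ
  rcases eFun_mem (C := C) (l := κ.ord) ξ with h | h
  · exact h
  · exact absurd (eFun_lt hreg hC ξ hξ) (not_lt.mpr h)

include hreg hC in
lemma eFun_cont : ∀ ξ, ξ < κ.ord → Order.IsSuccLimit ξ →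
    eFun C κ.ord ξ = sSup (eFun C κ.ord '' Iio ξ) := by
  intro ξ hξ hlim
  set e := eFun C κ.ord with he
  have he0 : e 0 = 0 := eFun_zero
  set s := sSup (e '' Iio ξ) with hs
  have hbdd : BddAbove (e '' Iio ξ) := bddAbove_of_subset_Iio (by
    rintro y ⟨c, hc, rfl⟩; exact eFun_lt hreg hC c (hc.trans hξ))
  have hsl : s < κ.ord := sup_image_lt hreg hξ _ (fun c hc => eFun_lt hreg hC c (hc.trans hξ))
  have h1ξ : (1 : Ordinal) < ξ := by
    have h := hlim.succ_lt hlim.pos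
    rwa [← Ordinal.add_one_eq_succ, zero_add] at h
  have hcs : ∀ c, c < ξ → c + 1 < ξ := fun c hc => by
    have h := hlim.succ_lt hc
    rwa [← Ordinal.add_one_eq_succ] at h
  have hecs : ∀ c, c < ξ → e c < s := fun c hc =>
    lt_of_lt_of_le (eFun_strictMono (lt_add_one c)) (le_csSup hbdd ⟨c+1, hcs c hc, rfl⟩)
  have hs0 : 0 < s := by
    have h01 : e 0 < e 1 := eFun_strictMono zero_lt_one
    rw [he0] at h01
    exact lt_of_lt_of_le h01 (le_csSup hbdd ⟨1, h1ξ, rfl⟩)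
  have hsC : s ∈ C := by
    refine hC.2.1 s hsl (pos_iff_ne_zero.mp hs0) (le_antisymm (csSup_le ?_
      (fun x hx => le_of_lt hx.2)) ?_)
    · refine ⟨e 1, ?_, hecs 1 h1ξ⟩
      rcases eFun_mem' hreg hC 1 (h1ξ.trans hξ) with h | h
      · have h01 : e 0 < e 1 := eFun_strictMono zero_lt_one
        rw [he0] at h01
        exact absurd (h : e 1 = 0) h01.ne'
      · exact h
    · refine csSup_le (⟨e 0, 0, hlim.pos, rfl⟩) ?_
      rintro x ⟨c, hc, rfl⟩
      rcases eq_zero_or_pos c with rfl | hc0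
      · rw [he0]
        exact zero_le
      · have hecC : e c ∈ C := by
          rcases eFun_mem' hreg hC c (hc.trans hξ) with h | h
          · have hpos : (0:Ordinal) < e c := he0 ▸ eFun_strictMono hc0
            exact absurd (h : e c = 0) hpos.ne'
          · exact h
        exact le_csSup (bddAbove_of_subset_Iio (fun y hy => hy.2)) ⟨hecC, hecs c hc⟩
  refine le_antisymm ?_ (csSup_le (⟨e 0, 0, hlim.pos, rfl⟩) (by
    rintro x ⟨c, hc, rfl⟩; exact (eFun_strictMono.monotone (le_of_lt hc))))
  exact Ordinal.enumOrd_le_of_forall_lt (Or.inl (mem_insert_of_mem _ hsC)) (fun b hb => hecs b hb)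

include hreg hC in
lemma eFun_index : ∀ α, α < κ.ord → ∃ ξ, ξ ≤ α ∧ eFun C κ.ord ξ ≤ α ∧ α < eFun C κ.ord (ξ+1) := by
  intro α hα
  set e := eFun C κ.ord with he
  have he0 : e 0 = 0 := eFun_zero
  set T := {ζ | e ζ ≤ α} with hT
  have h0T : (0 : Ordinal) ∈ T := by
    show e 0 ≤ α
    rw [he0]
    exact zero_le
  have hTa : T ⊆ Iic α := fun ζ hζ => le_trans (eFun_strictMono.le_apply) hζ
  have hbdd : BddAbove T := ⟨α, hTa⟩
  set ξ := sSup T with hξ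
  have hξα : ξ ≤ α := csSup_le ⟨0, h0T⟩ hTa
  have hmem : e ξ ≤ α := by
    rcases Ordinal.zero_or_succ_or_isSuccLimit ξ with h0 | ⟨ζ, hζ⟩ | hlim
    · rw [h0, he0]
      exact zero_le
    · obtain ⟨t, htT, hζt⟩ := exists_lt_of_lt_csSup ⟨0, h0T⟩
        (show ζ < sSup T from lt_of_lt_of_eq (lt_of_lt_of_eq (Order.lt_succ ζ) hζ) hξ)
      have ht : t = ξ := le_antisymm (le_csSup hbdd htT)
        (by rw [← hζ]; exact Order.succ_le_of_lt hζt)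
      exact ht ▸ htT
    · have hec : e ξ = sSup (e '' Iio ξ) := eFun_cont hreg hC ξ (lt_of_le_of_lt hξα hα) hlim
      rw [hec]
      refine csSup_le (⟨e 0, 0, hlim.pos, rfl⟩) ?_
      rintro x ⟨c, hc, rfl⟩
      obtain ⟨t, htT, hct⟩ := exists_lt_of_lt_csSup ⟨0, h0T⟩ (show c < sSup T from hc)
      exact le_of_lt (lt_of_lt_of_le (eFun_strictMono hct) htT)
  refine ⟨ξ, hξα, hmem, ?_⟩
  by_contra hcon
  push_neg at hcon
  exact absurd (le_csSup hbdd (show ξ + 1 ∈ T from hcon)) (not_le.mpr (lt_add_one ξ))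

lemma eFun_index_unique {ξ ζ α : Ordinal} (h1 : eFun C l ξ ≤ α) (h2 : α < eFun C l (ξ+1))
    (h3 : eFun C l ζ ≤ α) (h4 : α < eFun C l (ζ+1)) : ξ = ζ := by
  by_contra hne
  rcases lt_or_gt_of_ne hne with h | h
  · have : ξ + 1 ≤ ζ := by simpa [Order.succ] using Order.succ_le_of_lt h
    exact absurd (lt_of_lt_of_le h2 (le_trans (eFun_strictMono.monotone this) h3)) (not_lt.mpr le_rfl)
  · have : ζ + 1 ≤ ξ := by simpa [Order.succ] using Order.succ_le_of_lt h
    exact absurd (lt_of_lt_of_le h4 (le_trans (eFun_strictMono.monotone this) h1)) (not_lt.mpr le_rfl)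

include hreg hC in
lemma eFun_surj : ∀ c ∈ insert 0 C, ∃ ζ, ζ < κ.ord ∧ eFun C κ.ord ζ = c := by
  intro c hc
  have hcl : c < κ.ord := by
    rcases hc with rfl | hc
    · rw [Cardinal.lt_ord]
      simpa using hreg.pos
    · exact hC.1 hc
  obtain ⟨ζ, hζ⟩ := Ordinal.enumOrd_surjective (eSet_not_bddAbove (C := C) (l := κ.ord))
    (show c ∈ eSet C κ.ord from Or.inl hc)
  exact ⟨ζ, lt_of_le_of_lt (hζ ▸ eFun_strictMono.le_apply) hcl, hζ⟩

include hreg hC in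
lemma eFun_dichot : ∀ ξ, ξ < κ.ord → ∀ c ∈ C, c ≤ eFun C κ.ord ξ ∨ eFun C κ.ord (ξ+1) ≤ c := by
  intro ξ hξ c hc
  obtain ⟨ζ, hζl, rfl⟩ := eFun_surj hreg hC c (mem_insert_of_mem _ hc)
  rcases le_or_gt ζ ξ with h | h
  · exact Or.inl (eFun_strictMono.monotone h)
  · exact Or.inr (eFun_strictMono.monotone (by simpa [Order.succ] using Order.succ_le_of_lt h))

end Enum
section Otp

lemma iio_orderIso_le {a b : Ordinal} (f : Iio a ≃o Iio b) : a ≤ b := by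
  have key : ∀ x : Ordinal, ∀ hx : x < a, x ≤ (f ⟨x, hx⟩ : Ordinal) := by
    intro x
    induction x using Ordinal.induction with
    | h x ih =>
      intro hx
      by_contra hcon
      push_neg at hcon
      set y : Ordinal := (f ⟨x, hx⟩ : Ordinal) with hy
      have hyx : y < x := hcon
      have hya : y < a := hyx.trans hx
      have h1 : y ≤ (f ⟨y, hya⟩ : Ordinal) := ih y hyx hya
      have h2 : (f ⟨y, hya⟩ : Ordinal) < (f ⟨x, hx⟩ : Ordinal) := by
        have : (⟨y, hya⟩ : Iio a) < ⟨x, hx⟩ := hyx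
        exact f.lt_iff_lt.mpr this
      exact absurd (h1.trans_lt h2) (not_lt.mpr (le_of_eq hy))
  by_contra hcon
  push_neg at hcon
  exact absurd (key b hcon) (not_le.mpr (f ⟨b, hcon⟩).2)

lemma iio_orderIso_eq {a b : Ordinal} (h : Nonempty ((Iio a : Set Ordinal) ≃o (Iio b : Set Ordinal))) :
    a = b :=
  le_antisymm (iio_orderIso_le h.some) (iio_orderIso_le h.some.symm)

lemma setOtp_image_Iio {e : Ordinal → Ordinal} (he : StrictMono e) (ξ : Ordinal) :
    Sh830.setOtp (e '' Iio ξ) = ξ := by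
  have hiso : Nonempty ((Iio ξ : Set Ordinal) ≃o (e '' Iio ξ : Set Ordinal)) := by
    refine ⟨StrictMono.orderIsoOfSurjective
      (fun x => ⟨e x.1, mem_image_of_mem _ x.2⟩) ?_ ?_⟩
    · intro x y hxy
      exact he (show x.1 < y.1 from hxy)
    · rintro ⟨y, c, hc, rfl⟩
      exact ⟨⟨c, hc⟩, rfl⟩
  have hset : {o : Ordinal | Nonempty ((Iio o : Set Ordinal) ≃o (e '' Iio ξ : Set Ordinal))} = {ξ} := by
    ext o
    constructor
    · rintro ⟨f⟩
      exact iio_orderIso_eq ⟨f.trans hiso.some.symm⟩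
    · rintro rfl
      exact hiso
  rw [Sh830.setOtp, hset, csInf_singleton]

end Otp

section ClassComp

variable {κ : Cardinal} {C : Set Ordinal}
variable (hreg : κ.IsRegular) (hC : IsClubIn C κ.ord)

include hreg hC in
lemma class_eq {α ξ : Ordinal} (hξl : ξ < κ.ord)
    (h1 : eFun C κ.ord ξ ≤ α) (h2 : α < eFun C κ.ord (ξ+1)) :
    {γ | clubRel C γ α} = Ico (eFun C κ.ord ξ) (eFun C κ.ord (ξ+1)) := by
  have hl : Order.IsSuccLimit κ.ord := Cardinal.isSuccLimit_ord hreg.aleph0_le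
  have hsucc : ∀ ζ : Ordinal, ζ < κ.ord → ζ + 1 < κ.ord := fun ζ hζ => by
    have := hl.succ_lt hζ; simpa [Order.succ] using this
  set e := eFun C κ.ord with he
  have he0 : e 0 = 0 := eFun_zero
  have hα : α < κ.ord := h2.trans (eFun_lt hreg hC (ξ+1) (hsucc ξ hξl))
  ext γ
  constructor
  · intro hγ
    have hγl : γ < κ.ord := by
      obtain ⟨c, hcC, hαc⟩ := hC.2.2 α hα
      exact ((hγ c hcC).mpr hαc).trans (hC.1 hcC)
    obtain ⟨ζ, hζγ, g1, g2⟩ := eFun_index hreg hC γ hγl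
    have hζl : ζ < κ.ord := lt_of_le_of_lt hζγ hγl
    have heq : ζ = ξ := by
      by_contra hne
      rcases lt_or_gt_of_ne hne with h | h
      · -- ζ < ξ : use c = e (ζ+1) ∈ C
        have hc1 : e (ζ+1) ∈ C := by
          rcases eFun_mem' hreg hC (ζ+1) (hsucc ζ hζl) with hh | hh
          · have hp : (0:Ordinal) < e (ζ+1) :=
              he0 ▸ eFun_strictMono ((show (0:Ordinal) ≤ ζ from zero_le).trans_lt (lt_add_one ζ))
            exact absurd (hh : e (ζ+1) = 0) hp.ne'
          · exact hh
        have hsle : ζ + 1 ≤ ξ := by simpa [Order.succ] using Order.succ_le_of_lt h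
        have hαlt : α < e (ζ+1) := (hγ _ hc1).mp g2
        exact absurd (hαlt.trans_le ((eFun_strictMono.monotone hsle).trans h1))
          (lt_irrefl α)
      · -- ξ < ζ : use c = e (ξ+1) ∈ C
        have hc1 : e (ξ+1) ∈ C := by
          rcases eFun_mem' hreg hC (ξ+1) (hsucc ξ hξl) with hh | hh
          · have hp : (0:Ordinal) < e (ξ+1) :=
              he0 ▸ eFun_strictMono ((show (0:Ordinal) ≤ ξ from zero_le).trans_lt (lt_add_one ξ))
            exact absurd (hh : e (ξ+1) = 0) hp.ne'
          · exact hh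
        have hsle : ξ + 1 ≤ ζ := by simpa [Order.succ] using Order.succ_le_of_lt h
        have hγlt : γ < e (ξ+1) := (hγ _ hc1).mpr h2
        exact absurd (hγlt.trans_le ((eFun_strictMono.monotone hsle).trans g1))
          (lt_irrefl γ)
    exact ⟨heq ▸ g1, heq ▸ g2⟩
  · rintro ⟨hg1, hg2⟩ c hcC
    rcases eFun_dichot hreg hC ξ hξl c hcC with h | h
    · constructor
      · intro hcon
        exact absurd (lt_of_le_of_lt (h.trans hg1) hcon) (lt_irrefl c)
      · intro hcon
        exact absurd (lt_of_le_of_lt (h.trans h1) hcon) (lt_irrefl c)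
    · exact ⟨fun _ => h2.trans_le h, fun _ => hg2.trans_le h⟩

include hreg hC in
lemma minClass_eq {α ξ : Ordinal} (hξl : ξ < κ.ord)
    (h1 : eFun C κ.ord ξ ≤ α) (h2 : α < eFun C κ.ord (ξ+1)) :
    minClass (clubRel C) α = eFun C κ.ord ξ := by
  rw [minClass, class_eq hreg hC hξl h1 h2]
  exact le_antisymm (csInf_le' ⟨le_rfl, eFun_strictMono (lt_add_one ξ)⟩)
    (le_csInf ⟨_, le_rfl, eFun_strictMono (lt_add_one ξ)⟩ fun x hx => hx.1)

include hreg hC in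
lemma fEquiv_eq {α ξ : Ordinal} (hξl : ξ < κ.ord)
    (h1 : eFun C κ.ord ξ ≤ α) (h2 : α < eFun C κ.ord (ξ+1)) :
    fEquiv (clubRel C) α = ξ := by
  have hl : Order.IsSuccLimit κ.ord := Cardinal.isSuccLimit_ord hreg.aleph0_le
  have hsucc : ∀ ζ : Ordinal, ζ < κ.ord → ζ + 1 < κ.ord := fun ζ hζ => by
    have := hl.succ_lt hζ; simpa [Order.succ] using this
  set e := eFun C κ.ord with he
  have hα : α < κ.ord := h2.trans (eFun_lt hreg hC (ξ+1) (hsucc ξ hξl))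
  have hminα : minClass (clubRel C) α = e ξ := minClass_eq hreg hC hξl h1 h2
  have hset : {β | β < α ∧ β = minClass (clubRel C) β ∧
      minClass (clubRel C) β < minClass (clubRel C) α} = e '' Iio ξ := by
    ext β
    constructor
    · rintro ⟨hβα, hβmin, hβlt⟩
      obtain ⟨ζ, hζβ, g1, g2⟩ := eFun_index hreg hC β (hβα.trans hα)
      have hζl : ζ < κ.ord := lt_of_le_of_lt hζβ (hβα.trans hα)
      have hminβ : minClass (clubRel C) β = e ζ := minClass_eq hreg hC hζl g1 g2
      rw [hminβ, hminα] at hβlt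
      exact ⟨ζ, eFun_strictMono.lt_iff_lt.mp hβlt, (hβmin.trans hminβ).symm⟩
    · rintro ⟨ζ, hζξ, rfl⟩
      have hζl : ζ < κ.ord := (mem_Iio.mp hζξ).trans hξl
      have hminβ : minClass (clubRel C) (e ζ) = e ζ :=
        minClass_eq hreg hC hζl le_rfl (eFun_strictMono (lt_add_one ζ))
      refine ⟨lt_of_lt_of_le (eFun_strictMono (mem_Iio.mp hζξ)) h1, hminβ.symm, ?_⟩
      rw [hminβ, hminα]
      exact eFun_strictMono (mem_Iio.mp hζξ)
  rw [fEquiv, hset]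
  exact setOtp_image_Iio eFun_strictMono ξ

include hreg hC in
lemma quot_preimage_eq (X : Set Ordinal) (hX : X ⊆ Iio κ.ord) :
    Iio κ.ord ∩ (fEquiv (clubRel C))⁻¹' X =
      ⋃ ζ ∈ X, Ico (eFun C κ.ord ζ) (eFun C κ.ord (ζ+1)) := by
  have hl : Order.IsSuccLimit κ.ord := Cardinal.isSuccLimit_ord hreg.aleph0_le
  have hsucc : ∀ ζ : Ordinal, ζ < κ.ord → ζ + 1 < κ.ord := fun ζ hζ => by
    have := hl.succ_lt hζ; simpa [Order.succ] using this
  ext α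
  constructor
  · rintro ⟨hαl, hmem⟩
    obtain ⟨ξ, hξα, g1, g2⟩ := eFun_index hreg hC α hαl
    have hfα : fEquiv (clubRel C) α = ξ := fEquiv_eq hreg hC (lt_of_le_of_lt hξα hαl) g1 g2
    simp only [mem_iUnion]
    exact ⟨ξ, hfα ▸ hmem, g1, g2⟩
  · intro hmem
    simp only [mem_iUnion] at hmem
    obtain ⟨ζ, hζX, g1, g2⟩ := hmem
    have hζl : ζ < κ.ord := hX hζX
    have hαl : α < κ.ord := g2.trans (eFun_lt hreg hC (ζ+1) (hsucc ζ hζl))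
    have hfα : fEquiv (clubRel C) α = ζ := fEquiv_eq hreg hC hζl g1 g2
    exact ⟨hαl, by rw [mem_preimage, hfα]; exact hζX⟩

end ClassComp
section BC

variable {κ : Cardinal} {D : Set (Set Ordinal)}

lemma sub_one_eq_self {ξ : Ordinal} (hω : Ordinal.omega0 ≤ ξ) : ξ - 1 = ξ := by
  have h1 : 1 ≤ ξ := le_trans (le_of_lt Ordinal.one_lt_omega0) hω
  have h2 : 1 + (ξ - 1) = ξ := Ordinal.add_sub_cancel_of_le h1
  have h3 : 1 + ξ = ξ := Ordinal.one_add_of_omega0_le hω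
  exact add_left_cancel (h2.trans h3.symm)

/-- identification of the club enumeration with a given normal function -/
lemma eFun_eq_of (hreg : κ.IsRegular) {g : Ordinal → Ordinal} {C : Set Ordinal}
    (hC : IsClubIn C κ.ord)
    (hsub : ∀ ξ, ξ < κ.ord → g ξ ∈ insert 0 C)
    (hsurj : ∀ x ∈ insert 0 C, ∃ ζ, ζ < κ.ord ∧ g ζ = x)
    (hsm : ∀ α β, α < β → β < κ.ord → g α < g β) :
    ∀ ξ, ξ < κ.ord → eFun C κ.ord ξ = g ξ := by
  have hmono : ∀ α β, α ≤ β → β < κ.ord → g α ≤ g β := by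
    intro α β hab hβ
    rcases eq_or_lt_of_le hab with rfl | h
    · exact le_rfl
    · exact le_of_lt (hsm α β h hβ)
  intro ξ
  induction ξ using Ordinal.induction with
  | h ξ ih =>
    intro hξ
    refine le_antisymm (Ordinal.enumOrd_le_of_forall_lt (Or.inl (hsub ξ hξ)) ?_) ?_
    · intro c hc
      rw [show Ordinal.enumOrd (eSet C κ.ord) c = eFun C κ.ord c from rfl, ih c hc (hc.trans hξ)]
      exact hsm c ξ hc hξ
    · obtain ⟨ζ, hζl, hζ⟩ := hsurj _ (eFun_mem' hreg hC ξ hξ)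
      rcases lt_or_ge ζ ξ with h | h
      · rw [← ih ζ h hζl] at hζ
        exact absurd hζ (eFun_strictMono h).ne
      · exact hζ ▸ hmono ξ ζ h hζl

/-- (B) implies (C) -/
lemma B_imp_C (hreg : κ.IsRegular) (hunc : ℵ₀ < κ) (hD : IsUltrafilterOn κ.ord D)
    (hB : ∀ δ : Ordinal → Ordinal, (∀ ξ, ξ < κ.ord → δ ξ < κ.ord) →
        (∀ ξ ζ, ξ < ζ → ζ < κ.ord → δ ξ < δ ζ) →
        (∀ ξ, ξ < κ.ord → Order.IsSuccLimit ξ → δ ξ = sSup (δ '' Iio ξ)) →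
        ∃ C', IsClubIn C' κ.ord ∧ (⋃ ξ ∈ C', Ico (δ ξ) (δ (ξ + 1))) ∉ D) :
    ∀ C, IsClubIn C κ.ord → ∃ C', IsClubIn C' κ.ord ∧ C' ∉ quotClub κ.ord D C := by
  intro C hC
  obtain ⟨C', hC'club, hC'not⟩ := hB (eFun C κ.ord) (eFun_lt hreg hC)
    (fun ξ ζ h _ => eFun_strictMono h) (eFun_cont hreg hC)
  refine ⟨C', hC'club, ?_⟩
  intro hmem
  obtain ⟨hsub, hpre⟩ := hmem
  rw [quot_preimage_eq hreg hC C' hsub] at hpre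
  exact hC'not hpre

/-- (C) implies (B) -/
lemma C_imp_B (hreg : κ.IsRegular) (hunc : ℵ₀ < κ) (hD : IsUltrafilterOn κ.ord D)
    (hCc : ∀ C, IsClubIn C κ.ord → ∃ C', IsClubIn C' κ.ord ∧ C' ∉ quotClub κ.ord D C) :
    ∀ δ : Ordinal → Ordinal, (∀ ξ, ξ < κ.ord → δ ξ < κ.ord) →
        (∀ ξ ζ, ξ < ζ → ζ < κ.ord → δ ξ < δ ζ) →
        (∀ ξ, ξ < κ.ord → Order.IsSuccLimit ξ → δ ξ = sSup (δ '' Iio ξ)) →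
        ∃ C', IsClubIn C' κ.ord ∧ (⋃ ξ ∈ C', Ico (δ ξ) (δ (ξ + 1))) ∉ D := by
  intro δ hδl hδm hδc
  have hl : Order.IsSuccLimit κ.ord := Cardinal.isSuccLimit_ord hreg.aleph0_le
  have hsucc : ∀ ξ : Ordinal, ξ < κ.ord → ξ + 1 < κ.ord := fun ξ hξ => by
    have := hl.succ_lt hξ; simpa [Order.succ] using this
  have homega : Ordinal.omega0 < κ.ord := by
    have := Cardinal.ord_lt_ord.mpr hunc
    rwa [Cardinal.ord_aleph0] at this
  set C : Set Ordinal := δ '' Iio κ.ord with hCdef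
  have hCclub : IsClubIn C κ.ord :=
    club_image hl hδm hδl hδc (isClubIn_Iio hl)
  -- the modified function g with g 0 = 0
  classical
  set g : Ordinal → Ordinal := fun ξ =>
    if δ 0 = 0 then δ ξ else (if ξ = 0 then 0 else δ (ξ - 1)) with hgdef
  have hgval : ∀ ξ, g ξ = if δ 0 = 0 then δ ξ else (if ξ = 0 then 0 else δ (ξ - 1)) :=
    fun ξ => rfl
  have hg0 : g 0 = 0 := by
    rw [hgval]
    by_cases h : δ 0 = 0 <;> simp [h]
  have hgtail : ∀ ξ, Ordinal.omega0 ≤ ξ → g ξ = δ ξ := by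
    intro ξ hω
    rw [hgval]
    by_cases h : δ 0 = 0
    · simp [h]
    · have hξ0 : ξ ≠ 0 := fun hh => by
        rw [hh] at hω
        exact absurd (lt_of_lt_of_le Ordinal.omega0_pos (hω.trans (le_refl 0)))
          (lt_irrefl 0)
      rw [if_neg h, if_neg hξ0, sub_one_eq_self hω]
  have hsub1lt : ∀ ξ : Ordinal, ξ - 1 ≤ ξ := fun ξ => Ordinal.sub_le_self ξ 1
  have hgsm : ∀ α β, α < β → β < κ.ord → g α < g β := by
    intro α β hab hβ
    rw [hgval α, hgval β]
    by_cases h : δ 0 = 0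
    · simpa [h] using hδm α β hab hβ
    · rw [if_neg h, if_neg h]
      have hβ0 : β ≠ 0 := fun hh => not_lt_zero (hh ▸ hab)
      rw [if_neg hβ0]
      by_cases hα0 : α = 0
      · rw [if_pos hα0]
        rcases eq_zero_or_pos (β - 1) with hb | hb
        · rw [hb]
          exact pos_iff_ne_zero.mpr h
        · exact lt_of_lt_of_le (pos_iff_ne_zero.mpr h)
            (le_of_lt (hδm 0 (β-1) hb (lt_of_le_of_lt (hsub1lt β) hβ)))
      · rw [if_neg hα0]
        have h1a : 1 + (α - 1) = α := Ordinal.add_sub_cancel_of_le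
          (Ordinal.one_le_iff_ne_zero.mpr hα0)
        have h1b : 1 + (β - 1) = β := Ordinal.add_sub_cancel_of_le
          (Ordinal.one_le_iff_ne_zero.mpr hβ0)
        have : α - 1 < β - 1 := by
          have hh : 1 + (α - 1) < 1 + (β - 1) := by rw [h1a, h1b]; exact hab
          exact lt_of_add_lt_add_left hh
        exact hδm _ _ this (lt_of_le_of_lt (hsub1lt β) hβ)
  have hgl : ∀ ξ, ξ < κ.ord → g ξ < κ.ord := by
    intro ξ hξ
    rw [hgval]
    by_cases h : δ 0 = 0
    · simpa [h] using hδl ξ hξ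
    · rw [if_neg h]
      by_cases hξ0 : ξ = 0
      · rw [if_pos hξ0, Cardinal.lt_ord]
        simpa using hreg.pos
      · rw [if_neg hξ0]
        exact hδl _ (lt_of_le_of_lt (hsub1lt ξ) hξ)
  have hgsub : ∀ ξ, ξ < κ.ord → g ξ ∈ insert 0 C := by
    intro ξ hξ
    rw [hgval]
    by_cases h : δ 0 = 0
    · rw [if_pos h]
      exact mem_insert_of_mem _ ⟨ξ, hξ, rfl⟩
    · rw [if_neg h]
      by_cases hξ0 : ξ = 0
      · rw [if_pos hξ0]; exact mem_insert _ _
      · rw [if_neg hξ0]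
        exact mem_insert_of_mem _ ⟨ξ - 1, lt_of_le_of_lt (hsub1lt ξ) hξ, rfl⟩
  have hgsurj : ∀ x ∈ insert 0 C, ∃ ζ, ζ < κ.ord ∧ g ζ = x := by
    intro x hx
    rcases hx with rfl | ⟨ζ, hζ, rfl⟩
    · exact ⟨0, by rw [Cardinal.lt_ord]; simpa using hreg.pos, hg0⟩
    · by_cases h : δ 0 = 0
      · exact ⟨ζ, hζ, by rw [hgval, if_pos h]⟩
      · rcases le_or_gt Ordinal.omega0 ζ with hω | hω
        · exact ⟨ζ, hζ, hgtail ζ hω⟩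
        · refine ⟨ζ + 1, hsucc ζ hζ, ?_⟩
          rw [hgval, if_neg h, if_neg (by
            intro hh
            exact absurd ((show (0:Ordinal) ≤ ζ from zero_le).trans_lt (lt_add_one ζ)).ne' (by simpa using hh))]
          congr 1
          obtain ⟨n, rfl⟩ := Ordinal.lt_omega0.mp hω
          rw [show ((n : Ordinal) + 1) = 1 + (n : Ordinal) by
            rw [Ordinal.one_add_natCast]; exact Ordinal.add_one_eq_succ _]
          exact Ordinal.add_sub_cancel 1 _
  have hgcont : ∀ ξ, ξ < κ.ord → Order.IsSuccLimit ξ → g ξ = sSup (g '' Iio ξ) := by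
    intro ξ hξ hlim
    have hω : Ordinal.omega0 ≤ ξ := Ordinal.omega0_le_of_isSuccLimit hlim
    rw [hgtail ξ hω, hδc ξ hξ hlim]
    have hbdd1 : BddAbove (g '' Iio ξ) := bddAbove_of_subset_Iio (by
      rintro y ⟨c, hc, rfl⟩
      exact mem_Iio.mpr (hgl c ((mem_Iio.mp hc).trans hξ)))
    have hbdd2 : BddAbove (δ '' Iio ξ) := bddAbove_of_subset_Iio (by
      rintro y ⟨c, hc, rfl⟩
      exact mem_Iio.mpr (hδl c ((mem_Iio.mp hc).trans hξ)))
    have hcs : ∀ c, c < ξ → c + 1 < ξ := fun c hc => by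
      have h := hlim.succ_lt hc
      rwa [← Ordinal.add_one_eq_succ] at h
    have hgsucc : ∀ c, c < ξ → δ c ≤ g (c + 1) := by
      intro c hc
      by_cases h : δ 0 = 0
      · rw [hgval, if_pos h]
        exact le_of_lt (hδm c (c+1) (lt_add_one c) ((hcs c hc).trans hξ))
      · rcases le_or_gt Ordinal.omega0 c with hω' | hω'
        · rw [hgtail (c+1) (hω'.trans (le_of_lt (lt_add_one c)))]
          exact le_of_lt (hδm c (c+1) (lt_add_one c) ((hcs c hc).trans hξ))
        · rw [hgval, if_neg h, if_neg (by
            intro hh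
            exact absurd ((show (0:Ordinal) ≤ c from zero_le).trans_lt (lt_add_one c)).ne' (by simpa using hh))]
          obtain ⟨n, rfl⟩ := Ordinal.lt_omega0.mp hω'
          rw [show ((n : Ordinal) + 1) = 1 + (n : Ordinal) by
            rw [Ordinal.one_add_natCast]; exact Ordinal.add_one_eq_succ _]
          rw [Ordinal.add_sub_cancel 1 _]
    apply le_antisymm
    · refine csSup_le ⟨δ 0, 0, hlim.pos, rfl⟩ ?_
      rintro x ⟨c, hc, rfl⟩
      exact le_trans (hgsucc c hc) (le_csSup hbdd1 ⟨c+1, hcs c hc, rfl⟩)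
    · refine csSup_le ⟨g 0, 0, hlim.pos, rfl⟩ ?_
      rintro x ⟨c, hc, rfl⟩
      rw [hgval]
      by_cases h : δ 0 = 0
      · rw [if_pos h]
        exact le_csSup hbdd2 ⟨c, hc, rfl⟩
      · rw [if_neg h]
        by_cases hc0 : c = 0
        · rw [if_pos hc0]
          exact zero_le
        · rw [if_neg hc0]
          exact le_csSup hbdd2 ⟨c - 1, lt_of_le_of_lt (hsub1lt c) hc, rfl⟩
  -- identify eFun with g
  have heg : ∀ ξ, ξ < κ.ord → eFun C κ.ord ξ = g ξ :=
    eFun_eq_of hreg hCclub hgsub hgsurj hgsm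
  -- apply (C)
  obtain ⟨C'', hC''club, hC''not⟩ := hCc C hCclub
  have hWnot : (⋃ ζ ∈ C'', Ico (eFun C κ.ord ζ) (eFun C κ.ord (ζ+1))) ∉ D := by
    intro hW
    exact hC''not ⟨hC''club.1, by
      rw [quot_preimage_eq hreg hCclub C'' hC''club.1]; exact hW⟩
  have homega1 : Ordinal.omega0 + 1 < κ.ord := hsucc _ homega
  refine ⟨C'' \ Iio (Ordinal.omega0 + 1), hC''club.tail homega1, ?_⟩
  have hWl : (⋃ ζ ∈ C'', Ico (eFun C κ.ord ζ) (eFun C κ.ord (ζ+1))) ⊆ Iio κ.ord := by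
    intro x hx
    simp only [mem_iUnion] at hx
    obtain ⟨ζ, hζ, _, hx2⟩ := hx
    exact hx2.trans (eFun_lt hreg hCclub (ζ+1) (hsucc ζ (hC''club.1 hζ)))
  refine notin_mono hD ?_ hWl hWnot
  intro x hx
  simp only [mem_iUnion] at hx ⊢
  obtain ⟨ξ, ⟨hξC, hξω⟩, hx1, hx2⟩ := hx
  have hξω' : Ordinal.omega0 ≤ ξ := le_trans (le_of_lt (lt_add_one _)) (not_lt.mp hξω)
  have hξl : ξ < κ.ord := hC''club.1 hξC
  have he1 : eFun C κ.ord ξ = δ ξ := by rw [heg ξ hξl, hgtail ξ hξω']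
  have he2 : eFun C κ.ord (ξ+1) = δ (ξ+1) := by
    rw [heg (ξ+1) (hsucc ξ hξl), hgtail (ξ+1) (hξω'.trans (le_of_lt (lt_add_one ξ)))]
  exact ⟨ξ, hξC, he1 ▸ hx1, he2 ▸ hx2⟩

end BC

/-- Observation "easyob": for a uniform ultrafilter `D` on `λ` the following are
equivalent: (A) `D` is weakly reasonable; (B) for every increasing continuous
`⟨δ_ξ : ξ < λ⟩ ⊆ λ` there is a club `C*` with `∪ {[δ_ξ, δ_{ξ+1}) : ξ ∈ C*} ∉ D`;
(C) for every club `C` of `λ`, some club of `λ` is not a member of `D/C`. -/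
theorem stmt2 (κ : Cardinal) (hreg : κ.IsRegular) (hunc : ℵ₀ < κ)
    (D : Set (Set Ordinal)) (hD : IsUltrafilterOn κ.ord D)
    (hU : IsUniformOn κ.ord D) :
    (WeaklyReasonable κ.ord D ↔
      (∀ δ : Ordinal → Ordinal, (∀ ξ, ξ < κ.ord → δ ξ < κ.ord) →
        (∀ ξ ζ, ξ < ζ → ζ < κ.ord → δ ξ < δ ζ) →
        (∀ ξ, ξ < κ.ord → Order.IsSuccLimit ξ → δ ξ = sSup (δ '' Iio ξ)) →
        ∃ C', IsClubIn C' κ.ord ∧ (⋃ ξ ∈ C', Ico (δ ξ) (δ (ξ + 1))) ∉ D)) ∧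
    ((∀ δ : Ordinal → Ordinal, (∀ ξ, ξ < κ.ord → δ ξ < κ.ord) →
        (∀ ξ ζ, ξ < ζ → ζ < κ.ord → δ ξ < δ ζ) →
        (∀ ξ, ξ < κ.ord → Order.IsSuccLimit ξ → δ ξ = sSup (δ '' Iio ξ)) →
        ∃ C', IsClubIn C' κ.ord ∧ (⋃ ξ ∈ C', Ico (δ ξ) (δ (ξ + 1))) ∉ D) ↔
      (∀ C, IsClubIn C κ.ord →
        ∃ C', IsClubIn C' κ.ord ∧ C' ∉ quotClub κ.ord D C)) := by
  refine ⟨⟨fun hwr δ h1 h2 h3 => A_imp_B hreg hunc hD hwr δ h1 h2 h3,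
    fun hB => B_imp_A hreg hunc hD hB⟩,
    ⟨fun hB C hC => B_imp_C hreg hunc hD hB C hC,
    fun hC => C_imp_B hreg hunc hD hC⟩⟩

end Sh830

end
end

section
/- Let λ be a strongly inaccessible cardinal and D a uniform ultrafilter on λ. If Odd has a winning strategy in the game ⅁_D, then D is not weakly reasonable. -/
open Set Ordinal Cardinal

noncomputable section

namespace Sh830

section Aux

open Classical in
/-- Clamp an ordinal below `l` (send everything `≥ l` to `0`). -/
noncomputable def clampL (l o : Ordinal) : Ordinal := if o < l then o else 0

open Classical in
/-- The set of (successors of clamped) possible responses of a strategy `st` at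
positions with all data bounded by `δ`. -/
def respSet (l : Ordinal) (st : OddStr) (δ : Ordinal) : Set Ordinal :=
  {o | ∃ i, i ≤ δ ∧ ∃ b c : Ordinal → Ordinal, (∀ j, j ≤ i → b j ≤ δ) ∧
    (∀ j, j < i → c j ≤ δ) ∧
    o = clampL l (st i (fun j _ => b j) (fun j _ => c j)) + 1}

/-- The function `f ∈ F_λ` dominating all responses of the strategy. -/
noncomputable def fDef (l : Ordinal) (st : OddStr) (δ : Ordinal) : Ordinal :=
  max (δ + 1) (sSup (respSet l st δ))

open Classical in
/-- Even's moves, computed from Odd's moves `g` and a club `C`. -/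
noncomputable def betaOf (C : Set Ordinal.{0}) (g : Ordinal.{0} → Ordinal.{0}) (j : Ordinal.{0}) : Ordinal.{0} :=
  if j = 0 then nxt C 0
  else if ∃ k, j = Order.succ k then nxt C (g (Ordinal.pred j))
  else sSup (g '' Iio j)

lemma betaOf_zero (C : Set Ordinal.{0}) (g : Ordinal.{0} → Ordinal.{0}) : betaOf C g 0 = nxt C 0 := by
  unfold betaOf; rw [if_pos rfl]

lemma betaOf_succ (C : Set Ordinal.{0}) (g : Ordinal.{0} → Ordinal.{0}) (k : Ordinal.{0}) :
    betaOf C g (Order.succ k) = nxt C (g k) := by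
  unfold betaOf
  rw [if_neg (Ordinal.succ_ne_zero k), if_pos ⟨k, rfl⟩, Ordinal.pred_succ]

lemma betaOf_limit (C : Set Ordinal.{0}) (g : Ordinal.{0} → Ordinal.{0}) {j : Ordinal.{0}}
    (hj : Order.IsSuccLimit j) : betaOf C g j = sSup (g '' Iio j) := by
  unfold betaOf
  rw [if_neg hj.ne_zero, if_neg (fun ⟨k, hk⟩ => hj.succ_ne k hk.symm)]

lemma betaOf_congr {C : Set Ordinal.{0}} {g g' : Ordinal.{0} → Ordinal.{0}} {j : Ordinal.{0}}
    (h : ∀ k, k < j → g k = g' k) : betaOf C g j = betaOf C g' j := by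
  rcases Ordinal.zero_or_succ_or_isSuccLimit j with rfl | ⟨k, rfl⟩ | hj
  · rw [betaOf_zero, betaOf_zero]
  · rw [betaOf_succ, betaOf_succ, h k (Order.lt_succ k)]
  · rw [betaOf_limit _ _ hj, betaOf_limit _ _ hj, Set.image_congr (s := Iio j) fun a ha => h a ha]

/-- Congruence for strategy applications. -/
lemma st_congr (st : OddStr) {i i' : Ordinal} (hii : i = i')
    {A : ∀ j : Ordinal, j ≤ i → Ordinal} {A' : ∀ j : Ordinal, j ≤ i' → Ordinal}
    {B : ∀ j : Ordinal, j < i → Ordinal} {B' : ∀ j : Ordinal, j < i' → Ordinal}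
    (hA : ∀ j (h : j ≤ i'), A j (h.trans_eq hii.symm) = A' j h)
    (hB : ∀ j (h : j < i'), B j (h.trans_eq hii.symm) = B' j h) :
    st i A B = st i' A' B' := by
  subst hii
  have h1 : A = A' := funext fun j => funext fun h => hA j h
  have h2 : B = B' := funext fun j => funext fun h => hB j h
  rw [h1, h2]

/-- Odd's moves following the strategy `st`, when Even moves along `C` via `betaOf`. -/
noncomputable def gammaRec (st : OddStr) (C : Set Ordinal) : Ordinal → Ordinal :=
  Ordinal.lt_wf.fix fun i IH =>
    st i (fun j _ => betaOf C (fun k => if h : k < i then IH k h else 0) j)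
         (fun j _ => if h : j < i then IH j h else 0)

lemma gammaRec_eq (st : OddStr) (C : Set Ordinal) (i : Ordinal) :
    gammaRec st C i =
      st i (fun j _ => betaOf C (gammaRec st C) j) (fun j _ => gammaRec st C j) := by
  unfold gammaRec
  rw [WellFounded.fix_eq]
  exact st_congr st rfl
    (fun j hj => betaOf_congr fun k hk => dif_pos (hk.trans_le hj))
    (fun j hj => dif_pos hj)

lemma nxt_mem {C : Set Ordinal.{0}} {l : Ordinal.{0}} (hC : IsClubIn C l) {x : Ordinal} (hx : x < l) :
    nxt C x ∈ C ∧ x < nxt C x := by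
  obtain ⟨b, hbC, hb⟩ := hC.2.2 x hx
  exact csInf_mem (⟨b, hbC, hb⟩ : (C ∩ Ioi x).Nonempty)

lemma sSup_respSet_lt {κ : Cardinal} (hin : κ.IsInaccessible) (st : OddStr) {δ : Ordinal}
    (hδ : δ < κ.ord) : sSup (respSet κ.ord st δ) < κ.ord := by
  classical
  have hlim : Order.IsSuccLimit κ.ord := Cardinal.isSuccLimit_ord hin.1.le
  have hl0 : (0 : Ordinal) < κ.ord := hlim.pos
  have hcl : ∀ o, clampL κ.ord o + 1 < κ.ord := by
    intro o
    rw [Ordinal.add_one_eq_succ]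
    refine hlim.succ_lt ?_
    unfold clampL
    split_ifs with h
    · exact h
    · exact hl0
  have hδ1 : δ + 1 < κ.ord := by rw [Ordinal.add_one_eq_succ]; exact hlim.succ_lt hδ
  set T := (δ + 1).ToType with hT
  set e : T → Ordinal.{0} := fun t => (((Ordinal.ToType.mk (o := δ + 1))).symm t : Ordinal) with hedef
  set toT : Ordinal.{0} → T := fun j => (Ordinal.ToType.mk (o := δ + 1))
    ⟨min j δ, by rw [Set.mem_Iio, Ordinal.add_one_eq_succ]; exact Order.lt_succ_iff.2 (min_le_right j δ)⟩ with htoT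
  have hetoT : ∀ j : Ordinal, j ≤ δ → e (toT j) = j := by
    intro j hj
    simp only [hedef, htoT, OrderIso.symm_apply_apply]
    exact min_eq_left hj
  set F : T × (T → T) × (T → T) → Ordinal := fun p =>
    clampL κ.ord (st (e p.1)
      (fun j _ => e (p.2.1 (toT j)))
      (fun j _ => e (p.2.2 (toT j)))) + 1 with hF
  have hFl : ∀ p, F p < κ.ord := fun p => hcl _
  have hsub : respSet κ.ord st δ ⊆ Set.range F := by
    rintro o ⟨i, hi, b, c, hb, hc, rfl⟩
    refine ⟨⟨toT i, fun t => toT (b (e t)), fun t => toT (c (e t))⟩, ?_⟩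
    simp only [hF]
    refine congrArg (fun z => clampL κ.ord z + 1) ?_
    refine st_congr st (hetoT i hi) ?_ ?_
    · intro j h
      rw [hetoT j (h.trans hi), hetoT _ (hb j h)]
    · intro j h
      rw [hetoT j (h.le.trans hi), hetoT _ (hc j h)]
  have hne : (respSet κ.ord st δ).Nonempty :=
    ⟨_, 0, zero_le, (fun _ => 0), (fun _ => 0), fun j _ => zero_le,
      fun j hj => absurd hj not_lt_zero, rfl⟩
  have hle : sSup (respSet κ.ord st δ) ≤ iSup F := by
    refine csSup_le hne ?_
    intro o ho
    obtain ⟨p, rfl⟩ := hsub ho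
    exact le_ciSup (Ordinal.bddAbove_range F) p
  refine lt_of_le_of_lt hle (Ordinal.iSup_lt_ord ?_ hFl)
  rw [hin.isRegular.cof_ord]
  have hcT : #T < κ := by rw [Cardinal.mk_toType]; exact Cardinal.lt_ord.1 hδ1
  have hfun : #(T → T) < κ := by
    calc #(T → T) = #T ^ #T := (Cardinal.power_def T T).symm
    _ ≤ (2 ^ #T) ^ #T := Cardinal.power_le_power_right (Cardinal.cantor _).le
    _ = 2 ^ (#T * #T) := by rw [← Cardinal.power_mul]
    _ < κ := hin.isStrongPrelimit (Cardinal.mul_lt_of_lt hin.1.le hcT hcT)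
  calc #(T × (T → T) × (T → T)) = #T * (#(T → T) * #(T → T)) := by
        simp [Cardinal.mk_prod, Cardinal.lift_id]
  _ < κ := Cardinal.mul_lt_of_lt hin.1.le hcT (Cardinal.mul_lt_of_lt hin.1.le hfun hfun)

end Aux

/-- Proposition 1.7(1): if `λ` is strongly inaccessible and Odd has a winning strategy
in `⅁_D`, then `D` is not weakly reasonable. -/
theorem stmt3 (κ : Cardinal) (hin : κ.IsInaccessible)
    (D : Set (Set Ordinal)) (hD : IsUltrafilterOn κ.ord D)
    (hU : IsUniformOn κ.ord D)
    (hwin : ∃ st : OddStr, IsOddStrategy κ.ord st ∧ OddWinsWith κ.ord D st) :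
    ¬ WeaklyReasonable κ.ord D := by
  classical
  intro hWR
  obtain ⟨st, hst, hwin⟩ := hwin
  have hℵ : ℵ₀ < κ := hin.1
  have hlim : Order.IsSuccLimit κ.ord := Cardinal.isSuccLimit_ord hℵ.le
  have hl0 : (0 : Ordinal) < κ.ord := hlim.pos
  have hsucclt : ∀ {o : Ordinal}, o < κ.ord → o + 1 < κ.ord := fun {o} h => by
    rw [Ordinal.add_one_eq_succ]; exact hlim.succ_lt h
  have hltadd : ∀ o : Ordinal, o < o + 1 := fun o => by
    rw [Ordinal.add_one_eq_succ]; exact Order.lt_succ o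
  have hltsucc : ∀ {a b : Ordinal}, a < b + 1 ↔ a ≤ b := fun {a b} => by
    rw [Ordinal.add_one_eq_succ]; exact Order.lt_succ_iff
  have hcl : ∀ o, clampL κ.ord o < κ.ord := fun o => by
    unfold clampL; split_ifs with h
    · exact h
    · exact hl0
  have hbddR : ∀ δ, BddAbove (respSet κ.ord st δ) := by
    intro δ
    refine ⟨κ.ord, ?_⟩
    rintro o ⟨i, _, b, c, _, _, rfl⟩
    exact (hsucclt (hcl _)).le
  have hfl : ∀ δ, δ < κ.ord → fDef κ.ord st δ < κ.ord := fun δ hδ =>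
    max_lt (hsucclt hδ) (sSup_respSet_lt hin st hδ)
  have hfF : fDef κ.ord st ∈ Flam κ.ord := by
    refine ⟨hfl, ?_, ?_⟩
    · intro a b hab hbl
      refine max_le_max (add_le_add_left hab 1) (csSup_le_csSup (hbddR b) ?_ ?_)
      · exact ⟨_, 0, zero_le, (fun _ => 0), (fun _ => 0), fun j _ => zero_le,
          fun j hj => absurd hj not_lt_zero, rfl⟩
      · rintro o ⟨i, hi, b', c', hb', hc', rfl⟩
        exact ⟨i, hi.trans hab, b', c', fun j hj => (hb' j hj).trans hab,
          fun j hj => (hc' j hj).trans hab, rfl⟩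
    · intro g hg
      exact ⟨g, hg, (hltadd g).le.trans (le_max_left _ _)⟩
  obtain ⟨C, hC, hA⟩ := hWR _ hfF
  set γf := gammaRec st C with hγf
  set βf := betaOf C γf with hβf
  have hfollow : FollowsOdd κ.ord st βf γf := fun i _ => gammaRec_eq st C i
  have key : ∀ i, i < κ.ord →
      βf i ∈ C ∧ i ≤ βf i ∧ (∀ j, j < i → γf j < βf i) ∧ βf i < γf i ∧ γf i < κ.ord := by
    intro i
    induction i using Ordinal.induction with
    | h i IH =>
    intro hil
    have hbase : βf i ∈ C ∧ i ≤ βf i ∧ (∀ j, j < i → γf j < βf i) := by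
      rcases Ordinal.zero_or_succ_or_isSuccLimit i with rfl | ⟨k, rfl⟩ | hlimi
      · have hb0 : βf 0 = nxt C 0 := betaOf_zero C γf
        have h0 := nxt_mem hC hl0
        exact ⟨hb0 ▸ h0.1, zero_le, fun j hj => absurd hj not_lt_zero⟩
      · have hkl : k < κ.ord := (Order.lt_succ k).trans hil
        obtain ⟨hkC, hkle, hkj, hkγ, hkγl⟩ := IH k (Order.lt_succ k) hkl
        have hb : βf (Order.succ k) = nxt C (γf k) := betaOf_succ C γf k
        have hn := nxt_mem hC hkγl
        refine ⟨hb ▸ hn.1, ?_, ?_⟩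
        · rw [hb]
          exact Order.succ_le_of_lt (hkle.trans_lt (hkγ.trans hn.2))
        · intro j hj
          rw [hb]
          rcases (Order.lt_succ_iff.1 hj).lt_or_eq with hjk | rfl
          · exact (hkj j hjk).trans (hkγ.trans hn.2)
          · exact hn.2
      · have hb : βf i = sSup (γf '' Iio i) := betaOf_limit C γf hlimi
        have hγl : ∀ j, j < i → γf j < κ.ord := fun j hj => (IH j hj (hj.trans hil)).2.2.2.2
        have hbdd : BddAbove (γf '' Iio i) := by
          refine ⟨κ.ord, ?_⟩
          rintro x ⟨j, hj, rfl⟩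
          exact (hγl j hj).le
        have h0i : (0 : Ordinal) < i := hlimi.pos
        have hne : (γf '' Iio i).Nonempty := ⟨γf 0, 0, h0i, rfl⟩
        have hles : ∀ j, j < i → γf j ≤ βf i := fun j hj => hb ▸ le_csSup hbdd ⟨j, hj, rfl⟩
        have hstrict : ∀ j, j < i → γf j < βf i := by
          intro j hj
          have hj1 : Order.succ j < i := hlimi.succ_lt hj
          have h1 := IH (Order.succ j) hj1 (hj1.trans hil)
          calc γf j < βf (Order.succ j) := h1.2.2.1 j (Order.lt_succ j)
          _ < γf (Order.succ j) := h1.2.2.2.1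
          _ ≤ βf i := hles _ hj1
        have hβil : βf i < κ.ord := by
          rw [hb]
          have himg : γf '' Iio i =
              Set.range (fun x : i.ToType => γf (((Ordinal.ToType.mk (o := i))).symm x)) := by
            ext y
            constructor
            · rintro ⟨j, hj, rfl⟩
              exact ⟨(Ordinal.ToType.mk (o := i)) ⟨j, hj⟩, by simp⟩
            · rintro ⟨x, rfl⟩
              exact ⟨_, (((Ordinal.ToType.mk (o := i))).symm x).2, rfl⟩
          rw [himg]
          have hss : sSup (Set.range fun x : i.ToType => γf (((Ordinal.ToType.mk (o := i))).symm x)) =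
              ⨆ x : i.ToType, γf (((Ordinal.ToType.mk (o := i))).symm x) := rfl
          rw [hss]
          refine Ordinal.iSup_lt_ord ?_ fun x => hγl _ (((Ordinal.ToType.mk (o := i))).symm x).2
          rw [hin.isRegular.cof_ord, Cardinal.mk_toType]
          exact Cardinal.lt_ord.1 hil
        have h00 := IH 0 h0i hl0
        have hβ0i : βf 0 < βf i := h00.2.2.2.1.trans_le (hles 0 h0i)
        have hne0 : βf i ≠ 0 := fun h => absurd (h ▸ hβ0i) not_lt_zero
        have hclosed : sSup (C ∩ Iio (βf i)) = βf i := by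
          apply le_antisymm
          · exact csSup_le ⟨βf 0, h00.1, hβ0i⟩ fun x hx => hx.2.le
          · calc βf i = sSup (γf '' Iio i) := hb
            _ ≤ sSup (C ∩ Iio (βf i)) := by
                refine csSup_le hne ?_
                rintro x ⟨j, hj, rfl⟩
                have hj1 : Order.succ j < i := hlimi.succ_lt hj
                have h1 := IH (Order.succ j) hj1 (hj1.trans hil)
                have hmem : βf (Order.succ j) ∈ C ∩ Iio (βf i) :=
                  ⟨h1.1, h1.2.2.2.1.trans_le (hles _ hj1)⟩
                have hbddc : BddAbove (C ∩ Iio (βf i)) := ⟨βf i, fun x hx => hx.2.le⟩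
                exact (h1.2.2.1 j (Order.lt_succ j)).le.trans (le_csSup hbddc hmem)
        have hiC : βf i ∈ C := hC.2.1 _ hβil hne0 hclosed
        have hige : i ≤ βf i := by
          by_contra hcon
          push_neg at hcon
          have h1 := IH (βf i) hcon hβil
          exact absurd (hles _ hcon) (not_le_of_gt (h1.2.1.trans_lt h1.2.2.2.1))
        exact ⟨hiC, hige, hstrict⟩
    have hpos : IsPosition κ.ord i βf γf := by
      refine ⟨hil, ?_, ?_, ?_, ?_⟩
      · intro j hj
        rcases hj.lt_or_eq with hj | rfl
        · exact hC.1 (IH j hj (hj.trans hil)).1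
        · exact hC.1 hbase.1
      · intro j hj
        obtain ⟨-, -, -, h4, h5⟩ := IH j hj (hj.trans hil)
        exact ⟨h4, h5⟩
      · intro j hj
        rw [Ordinal.add_one_eq_succ]
        rcases (Order.succ_le_of_lt hj).lt_or_eq with h | h
        · exact (IH _ h (h.trans hil)).2.2.1 j (Order.lt_succ j)
        · rw [h]
          exact hbase.2.2 j hj
      · intro j _ hjl
        exact betaOf_limit C γf hjl
    have hmove := hst i βf γf hpos
    have hγi : γf i = st i (fun j _ => βf j) (fun j _ => γf j) := hfollow i hil
    refine ⟨hbase.1, hbase.2.1, hbase.2.2, ?_, ?_⟩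
    · rw [hγi]; exact hmove.1
    · rw [hγi]; exact hmove.2
  have hplay : IsPlay κ.ord βf γf := by
    refine ⟨fun i hi => ⟨hC.1 (key i hi).1, (key i hi).2.2.2.2⟩,
      fun i hi => (key i hi).2.2.2.1, ?_, fun i _ hlimi => betaOf_limit C γf hlimi⟩
    intro i hi1
    exact (key (i + 1) hi1).2.2.1 i (hltadd i)
  have hnotD := hwin βf γf hplay hfollow
  have hD' : IsUltraOn (Iio κ.ord) D := hD
  obtain ⟨hsubD, hZ, hemp, hup, hint, hdich⟩ := hD'
  have haddl : ∀ a b : Ordinal, a < κ.ord → b < κ.ord → a + b < κ.ord := by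
    intro a b ha hb
    rw [Cardinal.lt_ord] at ha hb ⊢
    rw [Ordinal.card_add]
    exact Cardinal.add_lt_of_lt hℵ.le ha hb
  have hAsub : (⋃ δ ∈ C, Ico δ (δ + fDef κ.ord st δ)) ⊆ Iio κ.ord := by
    intro x hx
    simp only [mem_iUnion] at hx
    obtain ⟨δ, hδC, hx⟩ := hx
    have hδl : δ < κ.ord := hC.1 hδC
    exact hx.2.trans (haddl δ _ hδl (hfl δ hδl))
  have hAc : Iio κ.ord \ (⋃ δ ∈ C, Ico δ (δ + fDef κ.ord st δ)) ∈ D :=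
    (hdich _ hAsub).resolve_left hA
  have hβ0l : βf 0 < κ.ord := hC.1 (key 0 hl0).1
  have hBnot : Iic (βf 0) ∉ D := by
    intro hmem
    have hcard := hU _ hmem
    have hIic : (Iic (βf 0) : Set Ordinal) = Iio (βf 0 + 1) := by
      ext x
      simp only [Set.mem_Iic, Set.mem_Iio]
      exact hltsucc.symm
    rw [hIic, Ordinal.mk_Iio_ordinal, Ordinal.mk_Iio_ordinal] at hcard
    have hcc := Cardinal.lift_inj.1 hcard
    rw [Cardinal.card_ord] at hcc
    exact absurd hcc (ne_of_lt (Cardinal.lt_ord.1 (hsucclt hβ0l)))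
  have hBc : Iio κ.ord \ Iic (βf 0) ∈ D := by
    refine (hdich (Iic (βf 0)) fun x hx => lt_of_le_of_lt hx hβ0l).resolve_left hBnot
  have hW := hint _ _ hAc hBc
  refine hnotD (hup _ _ hW ?_ ?_)
  · rintro ξ ⟨⟨hξl, hξA⟩, ⟨-, hξB⟩⟩
    have hξ0 : βf 0 < ξ := lt_of_not_ge fun h => hξB h
    have hSne : {j | j < κ.ord ∧ ξ < γf j}.Nonempty := by
      refine ⟨ξ + 1, hsucclt hξl, ?_⟩
      have hk := key (ξ + 1) (hsucclt hξl)
      exact (hltadd ξ).trans_le (hk.2.1.trans hk.2.2.2.1.le)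
    set i := sInf {j | j < κ.ord ∧ ξ < γf j} with hidef
    have hiS := csInf_mem hSne
    have hil : i < κ.ord := hiS.1
    have hξγ : ξ < γf i := hiS.2
    have hmin : ∀ j, j < i → γf j ≤ ξ := by
      intro j hj
      by_contra hcon
      push_neg at hcon
      have hij : i ≤ j := csInf_le (OrderBot.bddBelow _)
        (show j ∈ {j | j < κ.ord ∧ ξ < γf j} from ⟨hj.trans hil, hcon⟩)
      exact absurd hij (not_le_of_gt hj)
    by_cases hcase : ξ < βf i
    · rcases Ordinal.zero_or_succ_or_isSuccLimit i with h0 | ⟨k, hk⟩ | hlimi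
      · rw [h0] at hcase
        exact absurd hcase (lt_asymm hξ0)
      · have hkl : k < κ.ord := (Order.lt_succ k).trans_le (hk ▸ hil.le)
        refine Set.mem_biUnion hkl ?_
        refine ⟨hmin k ?_, ?_⟩
        · rw [← hk]; exact Order.lt_succ k
        · rw [Ordinal.add_one_eq_succ, hk]; exact hcase
      · exfalso
        have hble : βf i ≤ ξ := by
          refine le_trans (le_of_eq (betaOf_limit C γf hlimi)) (csSup_le ⟨γf 0, 0, hlimi.pos, rfl⟩ ?_)
          rintro x ⟨j, hj, rfl⟩
          exact hmin j hj
        exact absurd hcase (not_lt_of_ge hble)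
    · push_neg at hcase
      exfalso
      have hk := key i hil
      have hresp : γf i + 1 ∈ respSet κ.ord st (βf i) := by
        refine ⟨i, hk.2.1, βf, γf, ?_, ?_, ?_⟩
        · intro j hj
          rcases hj.lt_or_eq with h | rfl
          · exact ((key j (h.trans hil)).2.2.2.1.trans (hk.2.2.1 j h)).le
          · exact le_refl _
        · intro j hj
          exact (hk.2.2.1 j hj).le
        · rw [← hfollow i hil]
          unfold clampL
          rw [if_pos hk.2.2.2.2]
      have hfb : γf i < fDef κ.ord st (βf i) :=
        (hltadd (γf i)).trans_le ((le_csSup (hbddR _) hresp).trans (le_max_right _ _))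
      refine hξA (Set.mem_biUnion hk.1 ?_)
      exact ⟨hcase, (hξγ.trans hfb).trans_le le_add_self⟩
  · rintro x hx
    simp only [mem_iUnion] at hx
    obtain ⟨j, hj, hx⟩ := hx
    exact hx.2.trans (hC.1 (key (j + 1) (hsucclt hj)).1)


end Sh830

end
end

section
/- Let λ be a regular uncountable cardinal and D a uniform ultrafilter on λ. If D is not weakly reasonable, then Odd has a winning strategy in the game ⅁_D. -/
open Set Ordinal Cardinal

noncomputable section

namespace Sh830

/-- Proposition 1.7(2): if `D` is not weakly reasonable, then Odd has a winning
strategy in the game `⅁_D`. -/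
theorem stmt4 (κ : Cardinal) (hreg : κ.IsRegular) (hunc : ℵ₀ < κ)
    (D : Set (Set Ordinal)) (hD : IsUltrafilterOn κ.ord D)
    (hU : IsUniformOn κ.ord D)
    (hnwr : ¬ WeaklyReasonable κ.ord D) :
    ∃ st : OddStr, IsOddStrategy κ.ord st ∧ OddWinsWith κ.ord D st := by
  have hl : ℵ₀ ≤ κ := hunc.le
  set l := κ.ord with hldef
  have hlim : Order.IsSuccLimit l := Cardinal.isSuccLimit_ord hl
  have hlt1 : ∀ a : Ordinal, a < a + 1 := fun a => by
    rw [Ordinal.add_one_eq_succ]; exact Order.lt_succ a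
  have hsuccle : ∀ a b : Ordinal, a < b → a + 1 ≤ b := fun a b h => by
    rw [Ordinal.add_one_eq_succ]; exact Order.succ_le_of_lt h
  have hsucclt : ∀ i, i < l → i + 1 < l := fun i hi => by
    rw [Ordinal.add_one_eq_succ]; exact hlim.succ_lt hi
  have haddlt : ∀ a b : Ordinal, a < l → b < l → a + b + 1 < l := by
    intro a b ha hb
    rw [hldef, Cardinal.lt_ord] at ha hb ⊢
    rw [Ordinal.card_add, Ordinal.card_add, Ordinal.card_one]
    exact Cardinal.add_lt_of_lt hl (Cardinal.add_lt_of_lt hl ha hb)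
      (Cardinal.one_lt_aleph0.trans hunc)
  rw [WeaklyReasonable] at hnwr
  push_neg at hnwr
  obtain ⟨f, hfF, hfD⟩ := hnwr
  obtain ⟨hf1, hf2, hf3⟩ := hfF
  refine ⟨fun i b _ => b i le_rfl + f (b i le_rfl) + 1, ?_, ?_⟩
  · -- legality of the strategy
    intro i β γ hpos
    have hβi : β i < l := hpos.2.1 i le_rfl
    constructor
    · show β i < β i + f (β i) + 1
      exact lt_of_le_of_lt (le_self_add) (hlt1 _)
    · show β i + f (β i) + 1 < l
      exact haddlt _ _ hβi (hf1 _ hβi)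
  · -- the strategy is winning
    intro β γ hplay hfol hA
    obtain ⟨h1, h2, h3, h4⟩ := hplay
    have hγ : ∀ i, i < l → γ i = β i + f (β i) + 1 := fun i hi => hfol i hi
    -- monotonicity facts
    have hmono : ∀ i, i < l → ∀ j, j < i → γ j < β i := by
      intro i
      induction i using Ordinal.induction with
      | _ i IH =>
        intro hi j hj
        rcases Ordinal.zero_or_succ_or_isSuccLimit i with h0 | ⟨k, rfl⟩ | hL
        · exact absurd hj (by simp [h0])
        · have hki : k < Order.succ k := Order.lt_succ k
          have hk : k < l := hki.trans hi
          have hk1 : γ k < β (Order.succ k) := by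
            rw [← Ordinal.add_one_eq_succ] at hi ⊢
            exact h3 k hi
          rcases lt_or_eq_of_le (Order.lt_succ_iff.mp hj) with hjk | rfl
          · exact lt_trans (IH k hki hk j hjk) (lt_trans (h2 k hk) hk1)
          · exact hk1
        · have hjl : j < l := hj.trans hi
          have hj1 : j + 1 < i := by
            rw [Ordinal.add_one_eq_succ]; exact hL.succ_lt hj
          have hj1l : j + 1 < l := hj1.trans hi
          have c1 : γ j < β (j + 1) := h3 j hj1l
          have c2 : β (j + 1) < γ (j + 1) := h2 _ hj1l
          have c3 : γ (j + 1) ≤ sSup (γ '' Iio i) :=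
            le_csSup Ordinal.bddAbove_of_small ⟨j + 1, hj1, rfl⟩
          rw [h4 i hi hL]
          exact lt_of_lt_of_le (lt_trans c1 c2) c3
    have hβmono : ∀ i, i < l → ∀ j, j < i → β j < β i := by
      intro i hi j hj
      exact lt_trans (h2 j (hj.trans hi)) (hmono i hi j hj)
    have hβle : ∀ i, i < l → ∀ j, j ≤ i → β j ≤ β i := by
      intro i hi j hj
      rcases lt_or_eq_of_le hj with h | rfl
      · exact (hβmono i hi j h).le
      · exact le_rfl
    have hge : ∀ i, i < l → i ≤ β i := by
      intro i
      induction i using Ordinal.induction with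
      | _ i IH =>
        intro hi
        rcases Ordinal.zero_or_succ_or_isSuccLimit i with h0 | ⟨k, rfl⟩ | hL
        · simp [h0]
        · have hki : k < Order.succ k := Order.lt_succ k
          have hk : k < l := hki.trans hi
          have hk1 : γ k < β (Order.succ k) := by
            rw [← Ordinal.add_one_eq_succ] at hi ⊢
            exact h3 k hi
          exact Order.succ_le_of_lt
            (lt_of_le_of_lt (IH k hki hk) (lt_trans (h2 k hk) hk1))
        · rw [h4 i hi hL]
          by_contra hcon
          push_neg at hcon
          set s := sSup (γ '' Iio i) with hs
          have hsl : s < l := hcon.trans hi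
          have e1 : γ s ≤ s := le_csSup Ordinal.bddAbove_of_small ⟨s, hcon, rfl⟩
          have e2 : s < γ s := lt_of_le_of_lt (IH s hcon hsl) (h2 s hsl)
          exact absurd (lt_of_lt_of_le e2 e1) (lt_irrefl s)
    -- the club of Even's moves
    set C : Set Ordinal := β '' Iio l with hC
    have hclub : IsClubIn C l := by
      refine ⟨?_, ?_, ?_⟩
      · rintro x ⟨i, hi, rfl⟩; exact (h1 i hi).1
      · intro δ hδ hδ0 hsup
        set T : Set Ordinal := {j | j < l ∧ β j < δ} with hT
        have hTsub : ∀ j ∈ T, j < δ := fun j hj => lt_of_le_of_lt (hge j hj.1) hj.2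
        have hTbdd : BddAbove T := ⟨δ, fun j hj => (hTsub j hj).le⟩
        have hSeq : C ∩ Iio δ = β '' T := by
          ext x
          constructor
          · rintro ⟨⟨i, hi, rfl⟩, hx⟩; exact ⟨i, ⟨hi, hx⟩, rfl⟩
          · rintro ⟨i, ⟨hi, hx⟩, rfl⟩; exact ⟨⟨i, hi, rfl⟩, hx⟩
        rw [hSeq] at hsup
        have hTne : T.Nonempty := by
          by_contra hne
          rw [Set.not_nonempty_iff_eq_empty] at hne
          rw [hne, Set.image_empty] at hsup
          simp only [csSup_empty] at hsup
          exact hδ0 (by rw [← hsup]; rfl)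
        set i₀ := sSup T with hi₀
        have hTle : ∀ j ∈ T, j ≤ i₀ := fun j hj => le_csSup hTbdd hj
        have hi₀δ : i₀ ≤ δ := csSup_le hTne fun j hj => (hTsub j hj).le
        have hi₀l : i₀ < l := lt_of_le_of_lt hi₀δ hδ
        by_cases hmem : β i₀ < δ
        · exfalso
          have hle : sSup (β '' T) ≤ β i₀ := by
            apply csSup_le (hTne.image β)
            rintro x ⟨j, hj, rfl⟩
            exact hβle i₀ hi₀l j (hTle j hj)
          rw [hsup] at hle
          exact absurd (lt_of_le_of_lt hle hmem) (lt_irrefl δ)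
        · push_neg at hmem
          rcases Ordinal.zero_or_succ_or_isSuccLimit i₀ with h0 | ⟨k, hk⟩ | hL
          · exfalso
            obtain ⟨j, hj⟩ := hTne
            have hj0 : j = 0 := le_antisymm (h0 ▸ hTle j hj) (zero_le (a := j))
            rw [hj0] at hj
            rw [h0] at hmem
            exact absurd (lt_of_le_of_lt hmem hj.2) (lt_irrefl δ)
          · exfalso
            have hik : i₀ ≤ k := by
              apply csSup_le hTne
              intro j hj
              rcases lt_or_eq_of_le (hTle j hj) with h | h
              · rw [← hk] at h; exact Order.lt_succ_iff.mp h
              · exfalso; rw [h] at hj; exact absurd hj.2 (not_lt.mpr hmem)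
            rw [← hk] at hik
            exact absurd hik (not_le.mpr (Order.lt_succ k))
          · have hTIio : T = Iio i₀ := by
              ext j
              constructor
              · intro hj
                refine lt_of_le_of_ne (hTle j hj) fun h => ?_
                rw [h] at hj
                exact absurd hj.2 (not_lt.mpr hmem)
              · intro hj
                obtain ⟨j', hj'T, hjj'⟩ := exists_lt_of_lt_csSup hTne hj
                exact ⟨lt_of_lt_of_le hjj' ((hTle j' hj'T).trans hi₀l.le),
                  lt_trans (hβmono j' hj'T.1 j hjj') hj'T.2⟩
            have hIne : (Iio i₀).Nonempty := ⟨0, hL.pos⟩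
            have hcont := h4 i₀ hi₀l hL
            have hle1 : sSup (γ '' Iio i₀) ≤ δ := by
              apply csSup_le (hIne.image γ)
              rintro x ⟨j, hj, rfl⟩
              have hj1 : j + 1 < i₀ := by
                rw [Ordinal.add_one_eq_succ]; exact hL.succ_lt hj
              have hj1T : (j + 1) ∈ T := by rw [hTIio]; exact hj1
              exact (lt_trans (h3 j (hj1.trans hi₀l)) hj1T.2).le
            have hge1 : δ ≤ sSup (γ '' Iio i₀) := by
              rw [← hsup, hTIio]
              apply csSup_le (hIne.image β)
              rintro x ⟨j, hj, rfl⟩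
              exact le_trans (h2 j (hj.trans hi₀l)).le
                (le_csSup Ordinal.bddAbove_of_small ⟨j, hj, rfl⟩)
            exact ⟨i₀, hi₀l, by rw [hcont]; exact le_antisymm hle1 hge1⟩
      · intro α hα
        have hα1 : α + 1 < l := hsucclt α hα
        exact ⟨β (α + 1), ⟨α + 1, hα1, rfl⟩, lt_of_lt_of_le (hlt1 α) (hge _ hα1)⟩
    have hB : (⋃ δ ∈ C, Ico δ (δ + f δ)) ∈ D := hfD C hclub
    -- disjointness of Even's set and the club set
    have hdisj : (⋃ i ∈ Iio l, Ico (γ i) (β (i + 1))) ∩ (⋃ δ ∈ C, Ico δ (δ + f δ)) = ∅ := by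
      ext x
      simp only [Set.mem_inter_iff, Set.mem_empty_iff_false, iff_false, not_and]
      intro hx1 hx2
      rw [Set.mem_iUnion₂] at hx1 hx2
      obtain ⟨j, hj, hx1⟩ := hx1
      obtain ⟨d, hd, hx2⟩ := hx2
      obtain ⟨i, hi, rfl⟩ := hd
      rw [Set.mem_Ico] at hx1 hx2
      rw [Set.mem_Iio] at hj hi
      have hxγi : x < γ i := by
        rw [hγ i hi]
        exact lt_trans hx2.2 (hlt1 _)
      rcases lt_trichotomy j i with h | rfl | h
      · have hj1 : j + 1 ≤ i := hsuccle j i h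
        have : β (j + 1) ≤ β i := hβle i hi (j + 1) hj1
        exact absurd (lt_of_lt_of_le hx1.2 (this.trans hx2.1)) (lt_irrefl x)
      · exact absurd (lt_of_le_of_lt hx1.1 hxγi) (lt_irrefl _)
      · have : γ i < γ j := lt_trans (hmono j hj i h) (h2 j hj)
        exact absurd (lt_of_lt_of_le (hxγi.trans this) hx1.1) (lt_irrefl x)
    obtain ⟨hsub, hZ, hemp, hup, hint, hult⟩ := hD
    have := hint _ _ hA hB
    rw [hdisj] at this
    exact hemp this

end Sh830

end
end

section
/- Suppose λ is a regular uncountable cardinal, D is a weakly reasonable uniform ultrafilter on λ, and ⟨β_i : i < λ⟩ is an increasing continuous sequence of ordinals below λ. Then there is an increasing continuous sequence ⟨δ_ξ : ξ < λ⟩ of limit ordinals below λ such that ∪{[β_{δ_{2ξ+1}}, β_{δ_{2ξ+2}}) : ξ < λ} ∈ D. -/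
open Set Ordinal Cardinal

noncomputable section

namespace Sh830

/-! ### Auxiliary lemmas for `stmt5` -/

/-- Accumulation points below `l` of a set of ordinals. -/
def accInX (l : Ordinal) (S : Set Ordinal) : Set Ordinal :=
  {δ | δ < l ∧ 0 < δ ∧ sSup (S ∩ Iio δ) = δ}

theorem sSup_inter_Iio_eq {T : Set Ordinal} {δ : Ordinal}
    (h : ∀ γ < δ, ∃ x ∈ T ∩ Iio δ, γ < x) : sSup (T ∩ Iio δ) = δ := by
  apply le_antisymm
  · exact csSup_le' fun y hy => hy.2.le
  · by_contra hc
    push_neg at hc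
    obtain ⟨x, hx, hgx⟩ := h _ hc
    exact absurd (le_csSup ⟨δ, fun y hy => hy.2.le⟩ hx) (not_le.2 hgx)

theorem exists_of_sSup_inter_Iio {T : Set Ordinal} {δ : Ordinal}
    (h : sSup (T ∩ Iio δ) = δ) : ∀ γ < δ, ∃ x ∈ T ∩ Iio δ, γ < x := by
  intro γ hγ
  by_contra hc
  push_neg at hc
  have h2 : sSup (T ∩ Iio δ) ≤ γ := csSup_le' fun y hy => hc y hy
  rw [h] at h2
  exact absurd hγ (not_lt.2 h2)

theorem accInX_isLimit {l : Ordinal} {S : Set Ordinal} {δ : Ordinal}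
    (h : δ ∈ accInX l S) : Order.IsSuccLimit δ := by
  obtain ⟨-, h0, hsup⟩ := h
  refine Ordinal.isSuccLimit_iff.2 ⟨h0.ne', Order.isSuccPrelimit_of_succ_lt fun a ha => ?_⟩
  obtain ⟨x, hx, hax⟩ := exists_of_sSup_inter_Iio hsup a ha
  exact lt_of_le_of_lt (Order.succ_le_of_lt hax) hx.2

theorem accInX_closed {l : Ordinal} {S : Set Ordinal} {δ : Ordinal}
    (hδl : δ < l) (h0 : 0 < δ) (hsup : sSup (accInX l S ∩ Iio δ) = δ) :
    δ ∈ accInX l S := by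
  refine ⟨hδl, h0, sSup_inter_Iio_eq fun γ hγ => ?_⟩
  obtain ⟨x, hx, hγx⟩ := exists_of_sSup_inter_Iio hsup γ hγ
  obtain ⟨y, hy, hγy⟩ := exists_of_sSup_inter_Iio hx.1.2.2 γ hγx
  exact ⟨y, ⟨hy.1, lt_trans (show y < x from hy.2) hx.2⟩, hγy⟩

theorem sup_image_lt_s5 {l ξ : Ordinal} {g : Ordinal → Ordinal}
    (hcof : ξ.card < l.cof) (hg : ∀ ρ < ξ, g ρ < l) :
    sSup (g '' Iio ξ) < l := by
  set f : ξ.ToType → Ordinal := fun x => g ((ToType.mk (o := ξ)).symm x).1 with hf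
  have hfl : ∀ x, f x < l := fun x => hg _ ((ToType.mk (o := ξ)).symm x).2
  have h1 : sSup (g '' Iio ξ) ≤ iSup f := by
    apply csSup_le'
    rintro y ⟨ρ, hρ, rfl⟩
    have hx : f ((ToType.mk (o := ξ)) ⟨ρ, hρ⟩) = g ρ := by rw [hf]; simp
    exact hx ▸ le_ciSup (Ordinal.bddAbove_range f) _
  refine lt_of_le_of_lt h1 ?_
  have h2 : #ξ.ToType < l.cof := by rwa [mk_toType]
  exact Ordinal.iSup_lt_ord h2 hfl

theorem accInX_unbounded {l : Ordinal} {S : Set Ordinal} (hcof : ℵ₀ < l.cof)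
    (hS : S ⊆ Iio l) (hunb : ∀ α < l, ∃ x ∈ S, α < x) :
    ∀ α < l, ∃ δ ∈ accInX l S, α < δ := by
  intro α hα
  set G : Ordinal → Ordinal := fun x => sInf {y | y ∈ S ∧ x < y} with hGdef
  have hG : ∀ x, x < l → G x ∈ S ∧ x < G x := by
    intro x hx
    obtain ⟨y, hy, hxy⟩ := hunb x hx
    exact csInf_mem (⟨y, hy, hxy⟩ : Set.Nonempty {y | y ∈ S ∧ x < y})
  set s : ℕ → Ordinal := fun n => G^[n + 1] α with hsdef
  have hstep : ∀ n, (s n ∈ S ∧ α < s n) ∧ s (n + 1) = G (s n) := by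
    intro n
    induction n with
    | zero =>
      constructor
      · have h1 : s 0 = G α := by rw [hsdef]; simp
        rw [h1]
        exact ⟨(hG α hα).1, (hG α hα).2⟩
      · show G^[0 + 1 + 1] α = G (G^[0 + 1] α)
        rw [Function.iterate_succ_apply']
    | succ n ih =>
      have hsl : s n < l := hS ih.1.1
      have h1 : s (n + 1) = G (s n) := ih.2
      constructor
      · rw [h1]
        exact ⟨(hG _ hsl).1, lt_trans ih.1.2 (hG _ hsl).2⟩
      · show G^[n + 1 + 1 + 1] α = G (G^[n + 1 + 1] α)
        rw [Function.iterate_succ_apply']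
  have hmem : ∀ n, s n ∈ S := fun n => (hstep n).1.1
  have hsl : ∀ n, s n < l := fun n => hS (hmem n)
  have hmono : ∀ n, s n < s (n + 1) := by
    intro n
    rw [(hstep n).2]
    exact (hG _ (hsl n)).2
  set δ : Ordinal := ⨆ n, s n with hδdef
  have hbdd : BddAbove (Set.range s) := Ordinal.bddAbove_range s
  have hlt : ∀ n, s n < δ := fun n =>
    lt_of_lt_of_le (hmono n) (le_ciSup hbdd (n + 1))
  have hδl : δ < l := by
    rw [hδdef]
    exact Ordinal.iSup_lt_ord_lift
      (by rw [Cardinal.mk_eq_aleph0 ℕ, Cardinal.lift_aleph0]; exact hcof) hsl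
  have hαδ : α < δ := lt_trans (hstep 0).1.2 (hlt 0)
  refine ⟨δ, ⟨hδl, (zero_le : (0:Ordinal) ≤ α).trans_lt hαδ, ?_⟩, hαδ⟩
  apply le_antisymm
  · exact csSup_le' fun y hy => le_of_lt hy.2
  · by_contra hc
    push_neg at hc
    obtain ⟨n, hn⟩ : ∃ n, sSup (S ∩ Iio δ) < s n := by
      by_contra hc2
      push_neg at hc2
      have h3 : δ ≤ sSup (S ∩ Iio δ) := by
        rw [hδdef]
        exact ciSup_le hc2
      exact absurd (lt_of_le_of_lt h3 hc) (lt_irrefl δ)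
    exact absurd
      (le_csSup ⟨δ, fun y hy => le_of_lt hy.2⟩
        (show s n ∈ S ∩ Iio δ from ⟨hmem n, hlt n⟩)) (not_le.2 hn)

/-- Lemma 1.7Q: if `D` is a weakly reasonable uniform ultrafilter on `λ` and
`⟨β_i : i < λ⟩` is increasing continuous below `λ`, then there is an increasing
continuous sequence `⟨δ_ξ : ξ < λ⟩` of limit ordinals with
`∪ {[β_{δ_{2ξ+1}}, β_{δ_{2ξ+2}}) : ξ < λ} ∈ D`. -/
theorem stmt5 (κ : Cardinal) (hreg : κ.IsRegular) (hunc : ℵ₀ < κ)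
    (D : Set (Set Ordinal)) (hD : IsUltrafilterOn κ.ord D)
    (hU : IsUniformOn κ.ord D) (hwr : WeaklyReasonable κ.ord D)
    (β : Ordinal → Ordinal)
    (hlt : ∀ i, i < κ.ord → β i < κ.ord)
    (hmono : ∀ i j, i < j → j < κ.ord → β i < β j)
    (hcont : ∀ i, i < κ.ord → Order.IsSuccLimit i → β i = sSup (β '' Iio i)) :
    ∃ δ : Ordinal → Ordinal,
      (∀ ξ, ξ < κ.ord → δ ξ < κ.ord ∧ Order.IsSuccLimit (δ ξ)) ∧
      (∀ ξ ζ, ξ < ζ → ζ < κ.ord → δ ξ < δ ζ) ∧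
      (∀ ξ, ξ < κ.ord → Order.IsSuccLimit ξ → δ ξ = sSup (δ '' Iio ξ)) ∧
      (⋃ ξ ∈ Iio κ.ord, Ico (β (δ (2 * ξ + 1))) (β (δ (2 * ξ + 2)))) ∈ D := by
  classical
  set l : Ordinal := κ.ord with hldef
  have h2z : (2 : Ordinal) ≠ 0 := by norm_num
  have h2pos : (0 : Ordinal) < 2 := by norm_num
  have h12 : (1 : Ordinal) < 2 := by norm_num
  have h2succ : (2 : Ordinal) = Order.succ 1 := by
    rw [← Ordinal.add_one_eq_succ, one_add_one_eq_two]
  have hllim : Order.IsSuccLimit l := Cardinal.isSuccLimit_ord hunc.le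
  have hcoflt : ℵ₀ < l.cof := by rw [hldef, hreg.cof_eq]; exact hunc
  have hcard : ∀ {x : Ordinal}, x < l → x.card < κ := fun hx => Cardinal.lt_ord.1 hx
  have haddlt : ∀ {x y : Ordinal}, x < l → y < l → x + y < l := by
    intro x y hx hy
    refine Cardinal.lt_ord.2 ?_
    rw [Ordinal.card_add]
    exact Cardinal.add_lt_of_lt hunc.le (hcard hx) (hcard hy)
  have homega : ω < l := by
    refine Cardinal.lt_ord.2 ?_
    rw [Ordinal.card_omega0]
    exact hunc
  -- basic facts about β
  have hβle : ∀ i, i < l → i ≤ β i := by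
    intro i
    induction i using Ordinal.induction with
    | h i IH =>
      intro hi
      by_contra hc
      push_neg at hc
      have h1 : β (β i) < β i := hmono (β i) i hc hi
      exact absurd h1 (not_lt.2 (IH (β i) hc (hc.trans hi)))
  have hβmonole : ∀ i j, i ≤ j → j < l → β i ≤ β j := by
    intro i j hij hj
    rcases eq_or_lt_of_le hij with rfl | hij'
    · exact le_rfl
    · exact (hmono i j hij' hj).le
  -- the function f and the club C from weak reasonableness
  set f : Ordinal → Ordinal := fun α => β (α + ω) with hfdef
  have hfF : f ∈ Flam l := by
    refine ⟨fun α hα => hlt _ (haddlt hα homega),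
      fun α γ hle hγ => hβmonole _ _ (add_le_add_left hle ω) (haddlt hγ homega),
      fun γ hγ => ⟨γ, hγ, ?_⟩⟩
    have h1 : γ < γ + ω := by
      have := add_lt_add_right Ordinal.omega0_pos γ
      rwa [add_zero] at this
    exact (h1.trans_le (hβle (γ + ω) (haddlt hγ homega))).le
  obtain ⟨C, hCclub, hAnotD⟩ := hwr f hfF
  obtain ⟨hCsub, hCclosed, hCunb⟩ := hCclub
  -- the clubs C1 and C2
  set C1 : Set Ordinal := accInX l C with hC1def
  set C2 : Set Ordinal := accInX l C1 with hC2def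
  have hC1sub : C1 ⊆ C := fun δ hδ => hCclosed δ hδ.1 hδ.2.1.ne' hδ.2.2
  have hC1subl : C1 ⊆ Iio l := fun δ hδ => hδ.1
  have hC1unb : ∀ α < l, ∃ x ∈ C1, α < x := accInX_unbounded hcoflt hCsub hCunb
  have hC2sub1 : C2 ⊆ C1 := fun δ hδ => accInX_closed hδ.1 hδ.2.1 hδ.2.2
  have hC2subl : C2 ⊆ Iio l := fun δ hδ => hδ.1
  have hC2unb : ∀ α < l, ∃ x ∈ C2, α < x := accInX_unbounded hcoflt hC1subl hC1unb
  have hC2sub : C2 ⊆ C := fun δ hδ => hC1sub (hC2sub1 hδ)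
  -- the enumeration h of C2 (extended by Ici l to make it unbounded)
  set S : Set Ordinal := C2 ∪ Ici l with hSdef
  have hSnb : ¬ BddAbove S := by
    rintro ⟨b, hb⟩
    have h1 : max l (b + 1) ∈ S := Or.inr (le_max_left l (b + 1))
    have h2 : max l (b + 1) ≤ b := hb h1
    exact absurd ((Order.lt_succ b).trans_le ((le_max_right l (b + 1)).trans h2))
      (lt_irrefl b)
  set h : Ordinal → Ordinal := enumOrd S with hhdef
  have hmonoh : StrictMono h := enumOrd_strictMono hSnb
  have hmemh : ∀ ξ, h ξ ∈ S := fun ξ => enumOrd_mem hSnb ξ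
  have hbddh : ∀ ξ : Ordinal, BddAbove (h '' Iio ξ) := by
    intro ξ
    refine ⟨h ξ, ?_⟩
    rintro y ⟨ρ, hρ, rfl⟩
    exact (hmonoh hρ).le
  have hhl : ∀ ξ < l, h ξ < l := by
    intro ξ
    induction ξ using Ordinal.induction with
    | h ξ IH =>
      intro hξ
      have hsup : sSup (h '' Iio ξ) < l :=
        sup_image_lt_s5 (by rw [hldef, hreg.cof_eq]; exact hcard hξ)
          (fun ρ hρ => IH ρ hρ (hρ.trans hξ))
      obtain ⟨c, hc, hsc⟩ := hC2unb _ hsup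
      have h1 : h ξ ≤ c := by
        refine enumOrd_le_of_forall_lt (Or.inl hc) fun b hb => ?_
        exact lt_of_le_of_lt
          (le_csSup (hbddh ξ) (mem_image_of_mem h hb)) hsc
      exact lt_of_le_of_lt h1 (hC2subl hc)
  have hhC2 : ∀ ξ < l, h ξ ∈ C2 := by
    intro ξ hξ
    rcases hmemh ξ with h1 | h1
    · exact h1
    · exact absurd (hhl ξ hξ) (not_lt.2 h1)
  have hhcont : ∀ ξ < l, Order.IsSuccLimit ξ → h ξ = sSup (h '' Iio ξ) := by
    intro ξ hξ hξlim
    have hub : ∀ ρ < ξ, h ρ ≤ sSup (h '' Iio ξ) := fun ρ hρ =>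
      le_csSup (hbddh ξ) (mem_image_of_mem h hρ)
    have hlt2 : ∀ ρ < ξ, h ρ < sSup (h '' Iio ξ) := fun ρ hρ =>
      lt_of_lt_of_le (hmonoh (Order.lt_succ ρ))
        (by rw [← Ordinal.add_one_eq_succ]; exact hub (ρ + 1) (hξlim.succ_lt hρ))
    have hsl : sSup (h '' Iio ξ) < l :=
      sup_image_lt_s5 (by rw [hldef, hreg.cof_eq]; exact hcard hξ)
        (fun ρ hρ => hhl ρ (hρ.trans hξ))
    have h0s : 0 < sSup (h '' Iio ξ) :=
      (zero_le : (0:Ordinal) ≤ h 0).trans_lt (hlt2 0 hξlim.pos)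
    have hne : (h '' Iio ξ).Nonempty := ⟨h 0, mem_image_of_mem h hξlim.pos⟩
    have hsC2 : sSup (h '' Iio ξ) ∈ C2 := by
      refine accInX_closed hsl h0s (sSup_inter_Iio_eq fun γ hγ => ?_)
      obtain ⟨y, ⟨ρ, hρ, rfl⟩, hγy⟩ := exists_lt_of_lt_csSup hne hγ
      exact ⟨h ρ, ⟨hhC2 ρ (hρ.trans hξ), hlt2 ρ hρ⟩, hγy⟩
    apply le_antisymm
    · exact enumOrd_le_of_forall_lt (Or.inl hsC2) hlt2
    · apply csSup_le'
      rintro y ⟨ρ, hρ, rfl⟩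
      exact (hmonoh hρ).le
  have hgap : ∀ ξ < l, h ξ + ω < h (ξ + 1) := by
    intro ξ hξ
    have h1 : h ξ < h (ξ + 1) := hmonoh (lt_of_lt_of_le (Order.lt_succ ξ)
      (by rw [Ordinal.add_one_eq_succ]))
    have hsl : ξ + 1 < l := by
      rw [Ordinal.add_one_eq_succ]; exact hllim.succ_lt hξ
    have hlim1 : Order.IsSuccLimit (h (ξ + 1)) := accInX_isLimit (hhC2 (ξ + 1) hsl)
    have hle : h ξ + ω ≤ h (ξ + 1) := by
      rw [Ordinal.add_le_iff_of_isSuccLimit Ordinal.isSuccLimit_omega0]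
      intro b hb
      obtain ⟨n, rfl⟩ := Ordinal.lt_omega0.1 hb
      have h2 : ∀ m : ℕ, h ξ + (m : Ordinal) < h (ξ + 1) := by
        intro m
        induction m with
        | zero => simpa using h1
        | succ k ih =>
          have h3 : h ξ + ((k + 1 : ℕ) : Ordinal) = Order.succ (h ξ + k) := by
            rw [Nat.cast_succ, ← add_assoc, Ordinal.add_one_eq_succ]
          rw [h3]
          exact hlim1.succ_lt ih
      exact (h2 n).le
    rcases hle.lt_or_eq with h4 | h4
    · exact h4
    · exfalso
      have h5 := (hhC2 (ξ + 1) hsl).2.2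
      rw [← h4] at h5
      obtain ⟨x, ⟨hxC1, hxlt⟩, hgx⟩ := exists_of_sSup_inter_Iio h5 (h ξ) (by
        have := add_lt_add_right Ordinal.omega0_pos (h ξ)
        rwa [add_zero] at this)
      have hxlim : Order.IsSuccLimit x := accInX_isLimit hxC1
      have hxb : h ξ + (x - h ξ) = x := Ordinal.add_sub_cancel_of_le hgx.le
      have hblt : x - h ξ < ω := by
        have h6 : h ξ + (x - h ξ) < h ξ + ω := by rw [hxb]; exact hxlt
        exact (add_lt_add_iff_left (h ξ)).1 h6
      have hbne : x - h ξ ≠ 0 := by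
        intro h7
        rw [h7, add_zero] at hxb
        exact absurd hxb.symm (ne_of_gt hgx)
      obtain ⟨n, hn⟩ := Ordinal.lt_omega0.1 hblt
      have hnne : n ≠ 0 := by
        intro h8
        rw [h8] at hn
        exact hbne (by rw [hn]; simp)
      obtain ⟨m, rfl⟩ := Nat.exists_eq_succ_of_ne_zero hnne
      have h9 : x = Order.succ (h ξ + m) := by
        rw [← hxb, hn, Nat.cast_succ, ← add_assoc, Ordinal.add_one_eq_succ]
      rw [h9] at hxlim
      exact Order.not_isSuccLimit_succ _ hxlim
  -- the sequence d
  set d : Ordinal → Ordinal := fun ν => if ν % 2 = 0 then h (ν / 2) else h (ν / 2) + ω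
    with hddef
  have hmod2 : ∀ ν : Ordinal, ν % 2 = 0 ∨ ν % 2 = 1 := by
    intro ν
    have h1 : ν % 2 < Order.succ 1 := by rw [← h2succ]; exact Ordinal.mod_lt ν h2z
    exact Ordinal.le_one_iff.1 (Order.lt_succ_iff.1 h1)
  have hdecomp : ∀ ν : Ordinal, 2 * (ν / 2) + ν % 2 = ν := fun ν =>
    Ordinal.div_add_mod ν 2
  have hdivle : ∀ ν : Ordinal, ν / 2 ≤ ν := by
    intro ν
    calc ν / 2 = 1 * (ν / 2) := (one_mul _).symm
    _ ≤ 2 * (ν / 2) := mul_le_mul_left (by norm_num) _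
    _ ≤ 2 * (ν / 2) + ν % 2 := le_self_add
    _ = ν := hdecomp ν
  have hd_even : ∀ ξ, d (2 * ξ) = h ξ := by
    intro ξ
    have h1 : (2 * ξ) % 2 = 0 := by
      have := Ordinal.mul_add_mod_self 2 ξ 0
      rwa [add_zero, Ordinal.zero_mod] at this
    have h2 : (2 * ξ) / 2 = ξ := Ordinal.mul_div_cancel ξ h2z
    show (if (2 * ξ) % 2 = 0 then h ((2 * ξ) / 2) else h ((2 * ξ) / 2) + ω) = h ξ
    rw [if_pos h1, h2]
  have hd_odd : ∀ ξ, d (2 * ξ + 1) = h ξ + ω := by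
    intro ξ
    have h1 : (2 * ξ + 1) % 2 = 1 := by
      have := Ordinal.mul_add_mod_self 2 ξ 1
      rwa [Ordinal.mod_eq_of_lt h12] at this
    have h2 : (2 * ξ + 1) / 2 = ξ := by
      rw [Ordinal.mul_add_div ξ h2z, Ordinal.div_eq_zero_of_lt h12, add_zero]
    show (if (2 * ξ + 1) % 2 = 0 then h ((2 * ξ + 1) / 2)
      else h ((2 * ξ + 1) / 2) + ω) = h ξ + ω
    rw [if_neg (by rw [h1]; exact one_ne_zero), h2]
  have hd_le : ∀ ν, d ν ≤ h (ν / 2) + ω := by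
    intro ν
    show (if ν % 2 = 0 then h (ν / 2) else h (ν / 2) + ω) ≤ h (ν / 2) + ω
    by_cases h1 : ν % 2 = 0
    · rw [if_pos h1]
      exact le_self_add
    · rw [if_neg h1]
  have hd_ge : ∀ ν, h (ν / 2) ≤ d ν := by
    intro ν
    show h (ν / 2) ≤ (if ν % 2 = 0 then h (ν / 2) else h (ν / 2) + ω)
    by_cases h1 : ν % 2 = 0
    · rw [if_pos h1]
    · rw [if_neg h1]
      exact le_self_add
  -- d is strictly monotone
  have hdmono : ∀ ν μ, ν < μ → μ < l → d ν < d μ := by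
    intro ν μ hνμ hμ
    have hbl : μ / 2 < l := lt_of_le_of_lt (hdivle μ) hμ
    have hal : ν / 2 < l := lt_of_le_of_lt (hdivle ν) (hνμ.trans hμ)
    have hab : ν / 2 ≤ μ / 2 := by
      by_contra hc
      push_neg at hc
      have h1 : μ / 2 + 1 ≤ ν / 2 := by
        rw [Ordinal.add_one_eq_succ]; exact Order.succ_le_of_lt hc
      have h2 : μ < 2 * (μ / 2 + 1) := by
        rw [mul_add, mul_one]
        calc μ = 2 * (μ / 2) + μ % 2 := (hdecomp μ).symm
        _ < 2 * (μ / 2) + 2 := add_lt_add_right (Ordinal.mod_lt μ h2z) _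
      have h3 : 2 * (μ / 2 + 1) ≤ 2 * (ν / 2) := mul_le_mul_right h1 2
      have h4 : 2 * (ν / 2) ≤ ν := by
        calc 2 * (ν / 2) ≤ 2 * (ν / 2) + ν % 2 := le_self_add
        _ = ν := hdecomp ν
      exact absurd (h2.trans_le (h3.trans h4)) (not_lt.2 hνμ.le)
    rcases eq_or_lt_of_le hab with heq | hablt
    · -- same block index: ν even, μ odd
      have hν0 : ν % 2 = 0 := by
        rcases hmod2 ν with h1 | h1
        · exact h1
        · exfalso
          rcases hmod2 μ with h2 | h2
          · -- ν odd, μ even: ν = 2a+1 > 2a = μ, contradiction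
            have h3 : μ = 2 * (μ / 2) := by
              conv_lhs => rw [← hdecomp μ]
              rw [h2, add_zero]
            have h4 : ν = 2 * (μ / 2) + 1 := by
              conv_lhs => rw [← hdecomp ν]
              rw [h1, heq]
            rw [h3, h4] at hνμ
            exact absurd ((le_self_add : 2 * (μ / 2) ≤ 2 * (μ / 2) + 1).trans_lt hνμ)
              (lt_irrefl _)
          · have h3 : ν = μ := by
              conv_lhs => rw [← hdecomp ν]
              conv_rhs => rw [← hdecomp μ]
              rw [h1, h2, heq]
            exact absurd h3 (ne_of_lt hνμ)
      have hμ1 : μ % 2 = 1 := by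
        rcases hmod2 μ with h2 | h2
        · exfalso
          have h3 : ν = μ := by
            conv_lhs => rw [← hdecomp ν]
            conv_rhs => rw [← hdecomp μ]
            rw [hν0, h2, heq]
          exact absurd h3 (ne_of_lt hνμ)
        · exact h2
      show (if ν % 2 = 0 then h (ν / 2) else h (ν / 2) + ω)
        < (if μ % 2 = 0 then h (μ / 2) else h (μ / 2) + ω)
      rw [if_pos hν0, if_neg (by rw [hμ1]; exact one_ne_zero), heq]
      have := add_lt_add_right Ordinal.omega0_pos (h (μ / 2))
      rwa [add_zero] at this
    · -- different blocks
      calc d ν ≤ h (ν / 2) + ω := hd_le ν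
      _ < h (ν / 2 + 1) := hgap _ hal
      _ ≤ h (μ / 2) := hmonoh.monotone (by
          rw [Ordinal.add_one_eq_succ]; exact Order.succ_le_of_lt hablt)
      _ ≤ d μ := hd_ge μ
  -- values of d are limit ordinals below l
  have hdval : ∀ ξ < l, d ξ < l ∧ Order.IsSuccLimit (d ξ) := by
    intro ξ hξ
    have hal : ξ / 2 < l := lt_of_le_of_lt (hdivle ξ) hξ
    have hC2' : h (ξ / 2) ∈ C2 := hhC2 _ hal
    have hlim : Order.IsSuccLimit (h (ξ / 2)) := accInX_isLimit hC2'
    have hval : h (ξ / 2) < l := hhl _ hal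
    show (if ξ % 2 = 0 then h (ξ / 2) else h (ξ / 2) + ω) < l ∧
      Order.IsSuccLimit (if ξ % 2 = 0 then h (ξ / 2) else h (ξ / 2) + ω)
    by_cases h1 : ξ % 2 = 0
    · rw [if_pos h1]
      exact ⟨hval, hlim⟩
    · rw [if_neg h1]
      exact ⟨haddlt hval homega, Ordinal.isSuccLimit_add _ Ordinal.isSuccLimit_omega0⟩
  -- d is continuous
  have hdcont : ∀ ξ < l, Order.IsSuccLimit ξ → d ξ = sSup (d '' Iio ξ) := by
    intro ξ hξ hξlim
    have hν0 : ξ % 2 = 0 := by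
      rcases hmod2 ξ with h1 | h1
      · exact h1
      · exfalso
        have h2 : ξ = Order.succ (2 * (ξ / 2)) := by
          conv_lhs => rw [← hdecomp ξ]
          rw [h1, Ordinal.add_one_eq_succ]
        rw [h2] at hξlim
        exact Order.not_isSuccLimit_succ _ hξlim
    have hξeq : ξ = 2 * (ξ / 2) := by
      conv_lhs => rw [← hdecomp ξ]
      rw [hν0, add_zero]
    have halim : Order.IsSuccLimit (ξ / 2) := by
      rcases Ordinal.zero_or_succ_or_isSuccLimit (ξ / 2) with h1 | ⟨c, h1⟩ | h1
      · exfalso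
        rw [h1, mul_zero] at hξeq
        exact hξlim.pos.ne' hξeq
      · exfalso
        have h2 : ξ = 2 * c + 2 := by rw [hξeq, ← h1, Ordinal.mul_succ]
        have h3 : ξ = Order.succ (Order.succ (2 * c)) := by
          rw [h2, ← Ordinal.add_one_eq_succ, ← Ordinal.add_one_eq_succ, add_assoc]
          norm_num
        rw [h3] at hξlim
        exact Order.not_isSuccLimit_succ _ hξlim
      · exact h1
    have hal : ξ / 2 < l := lt_of_le_of_lt (hdivle ξ) hξ
    have hdξ : d ξ = h (ξ / 2) := by
      show (if ξ % 2 = 0 then h (ξ / 2) else h (ξ / 2) + ω) = h (ξ / 2)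
      rw [if_pos hν0]
    rw [hdξ, hhcont _ hal halim]
    apply le_antisymm
    · apply csSup_le'
      rintro y ⟨ρ, hρ, rfl⟩
      have hbdd : BddAbove (d '' Iio ξ) := by
        refine ⟨h ξ + ω, ?_⟩
        rintro z ⟨μ, hμ, rfl⟩
        refine (hd_le μ).trans (add_le_add_left (hmonoh.monotone ?_) ω)
        exact le_trans (hdivle μ) (le_of_lt (show μ < ξ from hμ))
      refine le_csSup hbdd ?_
      have h1 : 2 * ρ < ξ := by
        rw [hξeq]
        exact (mul_lt_mul_iff_right₀ h2pos).2 hρ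
      exact ⟨2 * ρ, h1, hd_even ρ⟩
    · apply csSup_le'
      rintro y ⟨μ, hμ, rfl⟩
      have hu : μ / 2 < ξ / 2 := by
        by_contra hc
        push_neg at hc
        have h1 : ξ ≤ 2 * (μ / 2) := by
          rw [hξeq]
          exact mul_le_mul_right hc 2
        have h2 : 2 * (μ / 2) ≤ μ := by
          calc 2 * (μ / 2) ≤ 2 * (μ / 2) + μ % 2 := le_self_add
          _ = μ := hdecomp μ
        exact absurd (h1.trans h2) (not_le.2 hμ)
      have hul : μ / 2 < l := lt_of_lt_of_le hu hal.le
      have h3 : d μ ≤ h (μ / 2 + 1) := by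
        calc d μ ≤ h (μ / 2) + ω := hd_le μ
        _ ≤ h (μ / 2 + 1) := (hgap _ hul).le
      refine h3.trans ?_
      refine le_csSup (hbddh (ξ / 2)) ?_
      refine mem_image_of_mem h ?_
      show μ / 2 + 1 < ξ / 2
      rw [Ordinal.add_one_eq_succ]
      exact halim.succ_lt hu
  -- the three sets W, V, X
  set W : Set Ordinal := Iio (β (h 0)) with hWdef
  set V : Set Ordinal := ⋃ ξ ∈ Iio l, Ico (β (h ξ)) (β (h ξ + ω)) with hVdef
  set X : Set Ordinal := ⋃ ξ ∈ Iio l, Ico (β (h ξ + ω)) (β (h (ξ + 1))) with hXdef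
  have hh0l : h 0 < l := hhl 0 hllim.pos
  have hWsub : W ⊆ Iio l := fun y hy => lt_trans hy (hlt _ hh0l)
  have hVsub : V ⊆ Iio l := by
    rintro y hy
    simp only [hVdef, mem_iUnion] at hy
    obtain ⟨ξ, hξ, hy⟩ := hy
    exact lt_trans hy.2 (hlt _ (haddlt (hhl ξ hξ) homega))
  have hXsub : X ⊆ Iio l := by
    rintro y hy
    simp only [hXdef, mem_iUnion] at hy
    obtain ⟨ξ, hξ, hy⟩ := hy
    have h1 : ξ + 1 < l := by
      rw [Ordinal.add_one_eq_succ]; exact hllim.succ_lt hξ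
    exact lt_trans hy.2 (hlt _ (hhl _ h1))
  obtain ⟨hDsub, hDZ, hDne, hDup, hDint, hDdich⟩ := hD
  -- W is not in D (uniformity)
  have hWnot : W ∉ D := by
    intro hWD
    have h1 := hU W hWD
    rw [hWdef, hldef] at h1
    rw [Ordinal.mk_Iio_ordinal, Ordinal.mk_Iio_ordinal, Cardinal.card_ord] at h1
    have h4 : (β (h 0)).card = κ := Cardinal.lift_injective h1
    exact absurd h4 (ne_of_lt (hcard (hlt _ hh0l)))
  -- V is not in D (weak reasonableness)
  have hVnot : V ∉ D := by
    intro hVD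
    apply hAnotD
    refine hDup V _ hVD ?_ ?_
    · rintro y hy
      simp only [hVdef, mem_iUnion] at hy
      obtain ⟨ξ, hξ, hy1, hy2⟩ := hy
      simp only [mem_iUnion]
      refine ⟨h ξ, hC2sub (hhC2 ξ hξ), ?_⟩
      constructor
      · exact le_trans (hβle _ (hhl ξ hξ)) hy1
      · exact lt_of_lt_of_le hy2 (le_add_self)
    · rintro y hy
      simp only [mem_iUnion] at hy
      obtain ⟨δ, hδ, hy1, hy2⟩ := hy
      exact lt_trans hy2 (haddlt (hCsub hδ) (hlt _ (haddlt (hCsub hδ) homega)))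
  -- covering
  have hcover : ∀ y, y < l → y ∉ W → y ∉ V → y ∈ X := by
    intro y hy hyW hyV
    have hyβ : β (h 0) ≤ y := not_lt.1 hyW
    have hy1l : y + 1 < l := by
      rw [Ordinal.add_one_eq_succ]; exact hllim.succ_lt hy
    have hTne : y < β (h (y + 1)) := by
      have h1 : y + 1 ≤ h (y + 1) := (enumOrd_strictMono hSnb).le_apply
      have h2 : h (y + 1) ≤ β (h (y + 1)) := hβle _ (hhl _ hy1l)
      refine lt_of_lt_of_le ?_ (h1.trans h2)
      rw [Ordinal.add_one_eq_succ]
      exact Order.lt_succ y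
    set T : Set Ordinal := {ξ | y < β (h ξ)} with hTdef
    have hTne' : T.Nonempty := ⟨y + 1, hTne⟩
    set ξ₀ : Ordinal := sInf T with hξ₀def
    have hξ₀T : y < β (h ξ₀) := csInf_mem hTne'
    have hξ₀le : ξ₀ ≤ y + 1 := csInf_le' hTne
    have hξ₀l : ξ₀ < l := lt_of_le_of_lt hξ₀le hy1l
    have hξ₀ne : ξ₀ ≠ 0 := by
      intro h1
      rw [h1] at hξ₀T
      exact absurd hξ₀T (not_lt.2 hyβ)
    have hmin : ∀ ρ < ξ₀, β (h ρ) ≤ y := by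
      intro ρ hρ
      by_contra hc
      push_neg at hc
      exact absurd (csInf_le' (show ρ ∈ T from hc)) (not_le.2 hρ)
    rcases Ordinal.zero_or_succ_or_isSuccLimit ξ₀ with h1 | ⟨ρ, h1⟩ | h1
    · exact absurd h1 hξ₀ne
    · -- successor case
      have hρlt : ρ < ξ₀ := by rw [← h1]; exact Order.lt_succ ρ
      have hρl : ρ < l := hρlt.trans hξ₀l
      have hρy : β (h ρ) ≤ y := hmin ρ hρlt
      have hysucc : y < β (h (ρ + 1)) := by
        rwa [Ordinal.add_one_eq_succ, h1]
      by_cases h2 : y < β (h ρ + ω)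
      · exfalso
        apply hyV
        simp only [hVdef, mem_iUnion]
        exact ⟨ρ, hρl, hρy, h2⟩
      · simp only [hXdef, mem_iUnion]
        exact ⟨ρ, hρl, not_lt.1 h2, hysucc⟩
    · -- limit case: contradiction with minimality
      exfalso
      have hhlim : Order.IsSuccLimit (h ξ₀) := accInX_isLimit (hhC2 ξ₀ hξ₀l)
      have hcont2 : β (h ξ₀) = sSup (β '' Iio (h ξ₀)) := hcont _ (hhl _ hξ₀l) hhlim
      rw [hcont2] at hξ₀T
      obtain ⟨z, ⟨i, hi, rfl⟩, hyz⟩ := exists_lt_of_lt_csSup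
        (⟨β 0, mem_image_of_mem β (show (0 : Ordinal) ∈ Iio (h ξ₀) from hhlim.pos)⟩)
        hξ₀T
      have hhξ₀ : h ξ₀ = sSup (h '' Iio ξ₀) := hhcont _ hξ₀l h1
      have hi' : i < sSup (h '' Iio ξ₀) := by
        rw [← hhξ₀]
        exact hi
      obtain ⟨w, ⟨ρ, hρ, rfl⟩, hiw⟩ := exists_lt_of_lt_csSup
        (⟨h 0, mem_image_of_mem h (show (0 : Ordinal) ∈ Iio ξ₀ from h1.pos)⟩) hi'
      have h3 : β i < β (h ρ) := hmono _ _ hiw (hhl _ (hρ.trans hξ₀l))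
      exact absurd (hmin ρ hρ) (not_le.2 (lt_trans hyz h3))
  -- X is in D
  have hXD : X ∈ D := by
    have hWc : Iio l \ W ∈ D := (hDdich W hWsub).resolve_left hWnot
    have hVc : Iio l \ V ∈ D := (hDdich V hVsub).resolve_left hVnot
    have hT : (Iio l \ W) ∩ (Iio l \ V) ∈ D := hDint _ _ hWc hVc
    refine hDup _ _ hT ?_ hXsub
    rintro y ⟨⟨hy1, hy2⟩, ⟨-, hy3⟩⟩
    exact hcover y hy1 hy2 hy3
  -- conclusion
  refine ⟨d, fun ξ hξ => hdval ξ hξ, fun ξ ζ hξζ hζ => hdmono ξ ζ hξζ hζ,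
    fun ξ hξ hξlim => hdcont ξ hξ hξlim, ?_⟩
  have hXeq : (⋃ ξ ∈ Iio κ.ord, Ico (β (d (2 * ξ + 1))) (β (d (2 * ξ + 2)))) = X := by
    rw [hXdef]
    refine iUnion₂_congr fun ξ hξ => ?_
    have h1 : d (2 * ξ + 1) = h ξ + ω := hd_odd ξ
    have h2 : d (2 * ξ + 2) = h (ξ + 1) := by
      have h3 : 2 * ξ + 2 = 2 * (ξ + 1) := by rw [mul_add, mul_one]
      rw [h3, hd_even]
    rw [h1, h2]
  rw [hXeq]
  exact hXD

end Sh830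

end
end
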